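/- arXiv:2407.05772 — 4 statements merged into one kernel-verified Lean document; each statement's English description precedes it below -/
import Mathlib

section
/- Let (z_j)_{j ∈ ℤ} be a sequence of nonnegative real numbers with Z := ∑_{j ∈ ℤ} z_j < ∞. Then for any ε ∈ (0,1), ∑_{j ∈ ℤ} z_j (∑_{k ≤ j} z_k)^{ε−1} ≤ C_ε Z^ε, where C_ε depends only on ε, and the convention 0·∞ = 0 is used (i.e., terms with z_j = 0 contribute 0 even if the partial sum is 0). -/
open scoped ENNReal

private lemma aux_tel (F : ℤ → ℝ) (a : ℤ) : ∀ b, a ≤ b →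
    ∑ j ∈ Finset.Icc a b, (F j - F (j - 1)) = F b - F (a - 1) := by
  refine Int.le_induction ?_ ?_
  · simp
  · intro b hb ih
    have hins : Finset.Icc a (b + 1) = insert (b + 1) (Finset.Icc a b) := by
      ext x; simp; omega
    rw [hins, Finset.sum_insert (by simp), ih]
    ring_nf

private lemma aux_key (ε x a : ℝ) (hε : 0 < ε) (hε1 : ε < 1) (hx : 0 ≤ x) (ha : 0 < a) :
    a * (x + a) ^ (ε - 1) ≤ (1 / ε) * ((x + a) ^ ε - x ^ ε) := by
  set y := x + a with hy
  have hy0 : 0 < y := by positivity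
  have hxy0 : 0 ≤ x / y := by positivity
  have h1 : (1 + (x / y - 1)) ^ ε ≤ 1 + ε * (x / y - 1) :=
    rpow_one_add_le_one_add_mul_self (by linarith) hε.le hε1.le
  have h2 : (1 : ℝ) + (x / y - 1) = x / y := by ring
  rw [h2] at h1
  have h3 : (x / y) ^ ε = x ^ ε / y ^ ε := Real.div_rpow hx hy0.le ε
  have h4 : y ^ (ε - 1) = y ^ ε / y := by
    rw [Real.rpow_sub hy0, Real.rpow_one]
  have hye : 0 < y ^ ε := Real.rpow_pos_of_pos hy0 ε
  rw [h3] at h1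
  rw [h4]
  have key : x ^ ε ≤ y ^ ε + ε * y ^ ε * (x / y - 1) := by
    have := mul_le_mul_of_nonneg_right h1 hye.le
    calc x ^ ε = x ^ ε / y ^ ε * y ^ ε := by field_simp
    _ ≤ (1 + ε * (x / y - 1)) * y ^ ε := this
    _ = y ^ ε + ε * y ^ ε * (x / y - 1) := by ring
  have hxy : x / y - 1 = -(a / y) := by field_simp; ring
  rw [hxy] at key
  have : ε * (a * (y ^ ε / y)) ≤ y ^ ε - x ^ ε := by
    have heq : ε * y ^ ε * (a / y) = ε * (a * (y ^ ε / y)) := by ring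
    nlinarith [key]
  have hεne : ε ≠ 0 := hε.ne'
  calc a * (y ^ ε / y) = (1 / ε) * (ε * (a * (y ^ ε / y))) := by field_simp
  _ ≤ (1 / ε) * (y ^ ε - x ^ ε) := by
      apply mul_le_mul_of_nonneg_left this (by positivity)

theorem stmt1 (ε : ℝ) (hε : 0 < ε) (hε1 : ε < 1) :
    ∃ C : ℝ, 0 < C ∧ ∀ z : ℤ → ℝ, (∀ j, 0 ≤ z j) → Summable z →
      ∑' j : ℤ, ENNReal.ofReal (z j * (∑' k : {k : ℤ // k ≤ j}, z k) ^ (ε - 1)) ≤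
        ENNReal.ofReal (C * (∑' j, z j) ^ ε) := by
  refine ⟨1 / ε, by positivity, fun z hz hsum => ?_⟩
  set Z := ∑' j, z j with hZ
  have hZ0 : 0 ≤ Z := tsum_nonneg hz
  set S : ℤ → ℝ := fun j => ∑' k : {k : ℤ // k ≤ j}, z k with hSdef
  have hS0 : ∀ j, 0 ≤ S j := fun j => tsum_nonneg (fun k => hz k)
  have hSle : ∀ j, S j ≤ Z := fun j =>
    Summable.tsum_subtype_le z (Set.Iic j) hz hsum
  have hstep : ∀ j : ℤ, S j = S (j - 1) + z j := by
    intro j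
    have h1 : Set.Iic (j - 1) = Set.Iio j := by ext x; simp
    have h2 : Set.Iio j ∪ {j} = Set.Iic j := Set.Iio_union_right
    have hd : Disjoint (Set.Iio j) ({j} : Set ℤ) := by simp
    have := Summable.tsum_union_disjoint (f := z) hd
      (hsum.subtype _) (hsum.subtype _)
    rw [h2] at this
    have hsing : ∑' k : ({j} : Set ℤ), z k = z j := tsum_singleton j z
    calc S j = ∑' k : (Set.Iic j : Set ℤ), z k := rfl
      _ = (∑' k : (Set.Iio j : Set ℤ), z k) + ∑' k : ({j} : Set ℤ), z k := this
      _ = S (j - 1) + z j := by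
          rw [hsing]
          congr 1
          have hr : S (j - 1) = ∑' k : (Set.Iic (j - 1) : Set ℤ), z k := rfl
          rw [hr, h1]
  have hmono : ∀ j : ℤ, S (j - 1) ≤ S j := fun j => by
    rw [hstep j]; linarith [hz j]
  -- pointwise bound
  have hpt : ∀ j : ℤ, z j * S j ^ (ε - 1) ≤ (1 / ε) * (S j ^ ε - S (j - 1) ^ ε) := by
    intro j
    rcases eq_or_lt_of_le (hz j) with h | h
    · rw [← h, zero_mul]
      have : S j = S (j - 1) := by rw [hstep j, ← h, add_zero]
      rw [this, sub_self, mul_zero]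
    · have := aux_key ε (S (j - 1)) (z j) hε hε1 (hS0 _) h
      rwa [← hstep j] at this
  have hgnn : ∀ j : ℤ, 0 ≤ (1 / ε) * (S j ^ ε - S (j - 1) ^ ε) := by
    intro j
    have h := Real.rpow_le_rpow (hS0 (j - 1)) (hmono j) hε.le
    have : (0:ℝ) ≤ S j ^ ε - S (j - 1) ^ ε := by linarith
    exact mul_nonneg (by positivity) this
  calc ∑' j : ℤ, ENNReal.ofReal (z j * S j ^ (ε - 1))
      ≤ ∑' j : ℤ, ENNReal.ofReal ((1 / ε) * (S j ^ ε - S (j - 1) ^ ε)) :=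
        ENNReal.tsum_le_tsum (fun j => ENNReal.ofReal_le_ofReal (hpt j))
    _ ≤ ENNReal.ofReal (1 / ε * Z ^ ε) := by
        apply Summable.tsum_le_of_sum_le ENNReal.summable
        intro s
        rcases s.eq_empty_or_nonempty with rfl | hs
        · simp
        have hsub : s ⊆ Finset.Icc (s.min' hs) (s.max' hs) := fun x hx =>
          Finset.mem_Icc.mpr ⟨Finset.min'_le s x hx, Finset.le_max' s x hx⟩
        calc ∑ j ∈ s, ENNReal.ofReal ((1 / ε) * (S j ^ ε - S (j - 1) ^ ε))
            ≤ ∑ j ∈ Finset.Icc (s.min' hs) (s.max' hs),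
                ENNReal.ofReal ((1 / ε) * (S j ^ ε - S (j - 1) ^ ε)) :=
              Finset.sum_le_sum_of_subset hsub
          _ = ENNReal.ofReal (∑ j ∈ Finset.Icc (s.min' hs) (s.max' hs),
                (1 / ε) * (S j ^ ε - S (j - 1) ^ ε)) :=
              (ENNReal.ofReal_sum_of_nonneg (fun j _ => hgnn j)).symm
          _ ≤ ENNReal.ofReal (1 / ε * Z ^ ε) := by
              apply ENNReal.ofReal_le_ofReal
              rw [← Finset.mul_sum, aux_tel (fun j => S j ^ ε) _ _ (Finset.min'_le s _ (s.max'_mem hs))]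
              apply mul_le_mul_of_nonneg_left _ (by positivity)
              have h1 : S (s.max' hs) ^ ε ≤ Z ^ ε :=
                Real.rpow_le_rpow (hS0 _) (hSle _) hε.le
              have h2 : 0 ≤ S (s.min' hs - 1) ^ ε := Real.rpow_nonneg (hS0 _) _
              linarith
end

section
/- Let d ≥ 1, m_2 > 0, and let A ⊂ ℝ^d be quasi-uniformly distributed with geometric constants c_0, C_1. Suppose functions ψ_α : ℝ^d → ℝ satisfy |ψ_α(x)| ≤ C_0 (1 + ‖x − α‖)^{−d−m_2} for all x ∈ ℝ^d and α ∈ A. Then for every a with 0 ≤ a < m_2 and every h ∈ (0,1), sup_{x ∈ ℝ^d} ∑_{α ∈ A} |ψ_α(x/h)| (‖x − αh‖ + h)^a ≤ C_a h^a, where C_a depends only on a, d, C_0 and the geometric constants of A. -/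
open MeasureTheory Metric
open scoped ENNReal

/-- A countable set `A ⊆ ℝ^d` is quasi-uniformly distributed with geometric constants
`c₀, C₁`. -/
def QuasiUniform {d : ℕ} (A : Set (EuclideanSpace ℝ (Fin d))) (c₀ C₁ : ℝ) : Prop :=
  A.Countable ∧ (∀ x, ∃ α ∈ A, dist x α ≤ c₀) ∧
    ∀ x : EuclideanSpace ℝ (Fin d),
      {α ∈ A | dist x α ≤ c₀}.Finite ∧ ({α ∈ A | dist x α ≤ c₀}.ncard : ℝ) ≤ C₁

section Aux
variable {d : ℕ}
local notation "E" => EuclideanSpace ℝ (Fin d)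


lemma finset_card_bound (hd : 0 < d) {A : Set E} {c₀ C₁ : ℝ} (hc₀ : 0 < c₀)
    (hmult : ∀ x : E, {α ∈ A | dist x α ≤ c₀}.Finite ∧ (({α ∈ A | dist x α ≤ c₀}.ncard : ℝ)) ≤ C₁)
    (y : E) (R : ℝ) (hR : 0 ≤ R) (F : Finset E) (hF : ↑F ⊆ A ∩ closedBall y R) :
    (F.card : ℝ) ≤ C₁ * ((R + c₀) / c₀) ^ d := by
  have hC₁ : 0 ≤ C₁ := le_trans (by positivity) (hmult y).2
  set V := volume (ball (0:E) 1) with hV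
  have hV0 : V ≠ 0 := (measure_ball_pos volume _ one_pos).ne'
  have hVtop : V ≠ ⊤ := measure_ball_lt_top.ne
  -- pointwise bound
  have hpt : ∀ x : E, ∑ α ∈ F, (closedBall α c₀).indicator (fun _ => (1:ℝ≥0∞)) x
      ≤ ENNReal.ofReal C₁ * (closedBall y (R + c₀)).indicator (fun _ => (1:ℝ≥0∞)) x := by
    intro x
    by_cases hx : ∃ α ∈ F, dist x α ≤ c₀
    · obtain ⟨α₀, hα₀F, hα₀⟩ := hx
      have hball : x ∈ closedBall y (R + c₀) := by
        have h1 : dist α₀ y ≤ R := by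
          have := hF hα₀F; exact mem_closedBall.mp this.2
        have := dist_triangle x α₀ y
        simp only [mem_closedBall]
        linarith
      have hsum : ∑ α ∈ F, (closedBall α c₀).indicator (fun _ => (1:ℝ≥0∞)) x
          = ((F.filter fun α => dist x α ≤ c₀).card : ℝ≥0∞) := by
        rw [Finset.card_filter]
        push_cast
        refine Finset.sum_congr rfl fun α _ => ?_
        classical
        rw [Set.indicator_apply]
        by_cases hh : dist x α ≤ c₀ <;> simp [mem_closedBall, hh]
      rw [hsum, Set.indicator_of_mem hball, mul_one]
      have hsub : ↑(F.filter fun α => dist x α ≤ c₀) ⊆ {α ∈ A | dist x α ≤ c₀} := by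
        intro α hα
        simp only [Finset.coe_filter, Set.mem_setOf_eq] at hα
        exact ⟨(hF hα.1).1, hα.2⟩
      have hcard : ((F.filter fun α => dist x α ≤ c₀).card : ℝ) ≤ C₁ := by
        have h1 : (F.filter fun α => dist x α ≤ c₀).card
            = (↑(F.filter fun α => dist x α ≤ c₀) : Set E).ncard := (Set.ncard_coe_finset _).symm
        have h2 := Set.ncard_le_ncard hsub (hmult x).1
        calc ((F.filter fun α => dist x α ≤ c₀).card : ℝ)
            ≤ ({α ∈ A | dist x α ≤ c₀}.ncard : ℝ) := by rw [h1]; exact_mod_cast h2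
          _ ≤ C₁ := (hmult x).2
      calc ((F.filter fun α => dist x α ≤ c₀).card : ℝ≥0∞)
          = ENNReal.ofReal ((F.filter fun α => dist x α ≤ c₀).card : ℝ) := by
            rw [ENNReal.ofReal_natCast]
        _ ≤ ENNReal.ofReal C₁ := ENNReal.ofReal_le_ofReal hcard
    · push_neg at hx
      have : ∑ α ∈ F, (closedBall α c₀).indicator (fun _ => (1:ℝ≥0∞)) x = 0 := by
        refine Finset.sum_eq_zero fun α hα => ?_
        exact Set.indicator_of_notMem (by simpa [mem_closedBall] using hx α hα) _
      rw [this]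
      exact zero_le
  -- integrate
  have hint : (F.card : ℝ≥0∞) * (ENNReal.ofReal (c₀ ^ d) * V)
      ≤ ENNReal.ofReal C₁ * (ENNReal.ofReal ((R + c₀) ^ d) * V) := by
    have hL : ∫⁻ x, ∑ α ∈ F, (closedBall α c₀).indicator (fun _ => (1:ℝ≥0∞)) x
        = (F.card : ℝ≥0∞) * (ENNReal.ofReal (c₀ ^ d) * V) := by
      rw [lintegral_finset_sum]
      · have : ∀ α ∈ F, ∫⁻ x, (closedBall α c₀).indicator (fun _ => (1:ℝ≥0∞)) x
            = ENNReal.ofReal (c₀ ^ d) * V := by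
          intro α _
          rw [lintegral_indicator_const measurableSet_closedBall, one_mul,
            Measure.addHaar_closedBall _ _ hc₀.le, finrank_euclideanSpace_fin]
        rw [Finset.sum_congr rfl this, Finset.sum_const, nsmul_eq_mul]
      · exact fun α _ => measurable_const.indicator measurableSet_closedBall
    have hRt : ∫⁻ x, ENNReal.ofReal C₁ * (closedBall y (R + c₀)).indicator (fun _ => (1:ℝ≥0∞)) x
        = ENNReal.ofReal C₁ * (ENNReal.ofReal ((R + c₀) ^ d) * V) := by
      rw [lintegral_const_mul _ (measurable_const.indicator measurableSet_closedBall),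
        lintegral_indicator_const measurableSet_closedBall, one_mul,
        Measure.addHaar_closedBall _ _ (by linarith : (0:ℝ) ≤ R + c₀), finrank_euclideanSpace_fin]
    rw [← hL, ← hRt]
    exact lintegral_mono hpt
  -- cancel
  rw [← mul_assoc, ← mul_assoc] at hint
  have h2 := (ENNReal.mul_le_mul_iff_left hV0 hVtop).mp hint
  have h3 : ENNReal.ofReal ((F.card : ℝ) * c₀ ^ d) ≤ ENNReal.ofReal (C₁ * (R + c₀) ^ d) := by
    rw [ENNReal.ofReal_mul (by positivity), ENNReal.ofReal_mul hC₁]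
    rw [ENNReal.ofReal_natCast] at *
    exact h2
  have h4 : (F.card : ℝ) * c₀ ^ d ≤ C₁ * (R + c₀) ^ d :=
    (ENNReal.ofReal_le_ofReal_iff (by positivity)).mp h3
  have heq : C₁ * ((R + c₀) / c₀) ^ d = C₁ * (R + c₀) ^ d / c₀ ^ d := by
    rw [div_pow]; ring
  rw [heq, le_div_iff₀ (by positivity)]
  linarith


-- real-number estimate for one dyadic block
lemma block_bound (hdum : True) {c₀ C₁ ε : ℝ} (hc₀ : 0 < c₀) (hC₁ : 0 ≤ C₁) (hε : 0 < ε) (k : ℕ) :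
    C₁ * (((2:ℝ)^k + c₀) / c₀) ^ d * ((2:ℝ)^k / 2) ^ (-(d:ℝ) - ε)
      ≤ (C₁ * ((1 + c₀)/c₀) ^ d * 2 ^ ((d:ℝ) + ε)) * ((2:ℝ) ^ (-ε)) ^ k := by
  have h2 : (0:ℝ) < 2 := two_pos
  have hpk : (0:ℝ) < (2:ℝ)^k := by positivity
  have h1 : C₁ * (((2:ℝ)^k + c₀) / c₀) ^ d ≤ C₁ * ((1 + c₀)/c₀) ^ d * ((2:ℝ)^k) ^ d := by
    rw [mul_assoc, ← mul_pow]
    refine mul_le_mul_of_nonneg_left (pow_le_pow_left₀ (by positivity) ?_ d) hC₁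
    have h2k : (1:ℝ) ≤ 2^k := one_le_pow₀ (by norm_num)
    rw [div_mul_eq_mul_div, div_le_div_iff₀ hc₀ hc₀]
    have hb : (2:ℝ)^k + c₀ ≤ (1 + c₀) * 2^k := by nlinarith [mul_nonneg hc₀.le (sub_nonneg.mpr h2k)]
    exact mul_le_mul_of_nonneg_right hb hc₀.le
  have hck : (0:ℝ) ≤ ((2:ℝ)^k / 2) ^ (-(d:ℝ) - ε) := Real.rpow_nonneg (by positivity) _
  calc C₁ * (((2:ℝ)^k + c₀) / c₀) ^ d * ((2:ℝ)^k / 2) ^ (-(d:ℝ) - ε)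
      ≤ C₁ * ((1 + c₀)/c₀) ^ d * ((2:ℝ)^k) ^ d * ((2:ℝ)^k / 2) ^ (-(d:ℝ) - ε) :=
        mul_le_mul_of_nonneg_right h1 hck
    _ = (C₁ * ((1 + c₀)/c₀) ^ d * 2 ^ ((d:ℝ) + ε)) * ((2:ℝ) ^ (-ε)) ^ k := by
        have e1 : ((2:ℝ)^k) ^ d = (2:ℝ) ^ ((k:ℝ) * d) := by
          rw [← Real.rpow_natCast (2:ℝ) k, ← Real.rpow_natCast _ d, ← Real.rpow_mul (by norm_num)]
        have e2 : ((2:ℝ)^k / 2) = (2:ℝ) ^ ((k:ℝ) - 1) := by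
          rw [Real.rpow_sub h2, Real.rpow_natCast, Real.rpow_one]
        have e3 : ((2:ℝ)^k / 2) ^ (-(d:ℝ) - ε) = (2:ℝ) ^ (((k:ℝ) - 1) * (-(d:ℝ) - ε)) := by
          rw [e2, ← Real.rpow_mul (by norm_num)]
        have e4 : ((2:ℝ) ^ (-ε)) ^ k = (2:ℝ) ^ (-ε * k) := by
          rw [← Real.rpow_natCast ((2:ℝ)^(-ε)) k, ← Real.rpow_mul (by norm_num)]
        have key : ((2:ℝ)^k) ^ d * ((2:ℝ)^k / 2) ^ (-(d:ℝ) - ε)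
            = 2 ^ ((d:ℝ) + ε) * ((2:ℝ) ^ (-ε)) ^ k := by
          rw [e1, e3, e4, ← Real.rpow_add h2, ← Real.rpow_add h2]
          congr 1
          ring
        rw [mul_assoc, key]
        ring
  done

lemma ball_count (hd : 0 < d) {A : Set E} {c₀ C₁ : ℝ} (hc₀ : 0 < c₀)
    (hmult : ∀ x : E, {α ∈ A | dist x α ≤ c₀}.Finite ∧ (({α ∈ A | dist x α ≤ c₀}.ncard : ℝ)) ≤ C₁)
    (y : E) (R : ℝ) (hR : 0 ≤ R) :
    (A ∩ closedBall y R).Finite ∧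
      ((A ∩ closedBall y R).ncard : ℝ) ≤ C₁ * ((R + c₀) / c₀) ^ d := by
  set B := C₁ * ((R + c₀) / c₀) ^ d with hB
  have hfin : (A ∩ closedBall y R).Finite := by
    by_contra hinf
    have hinf' : (A ∩ closedBall y R).Infinite := hinf
    obtain ⟨F, hFsub, hFcard⟩ := hinf'.exists_subset_card_eq (⌊B⌋₊ + 1)
    have h1 := finset_card_bound hd hc₀ hmult y R hR F hFsub
    rw [hFcard] at h1
    have h2 : B < (⌊B⌋₊ + 1 : ℝ) := Nat.lt_floor_add_one B
    push_cast at h1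
    linarith
  refine ⟨hfin, ?_⟩
  have h1 := finset_card_bound hd hc₀ hmult y R hR hfin.toFinset (by simp)
  rwa [← Set.ncard_eq_toFinset_card _ hfin] at h1

lemma tsum_bound (hd : 0 < d) {A : Set E} {c₀ C₁ : ℝ} (hc₀ : 0 < c₀) (hC₁ : 0 ≤ C₁)
    (hmult : ∀ x : E, {α ∈ A | dist x α ≤ c₀}.Finite ∧ (({α ∈ A | dist x α ≤ c₀}.ncard : ℝ)) ≤ C₁)
    {ε : ℝ} (hε : 0 < ε) (y : E) :
    ∑' α : A, ENNReal.ofReal ((1 + dist y (α : E)) ^ (-(d:ℝ) - ε))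
      ≤ ENNReal.ofReal ((C₁ * ((1 + c₀)/c₀) ^ d * 2 ^ ((d:ℝ) + ε)) * (1 - 2 ^ (-ε))⁻¹) := by
  classical
  set g : ↥A → ℝ≥0∞ := fun α => ENNReal.ofReal ((1 + dist y (α : E)) ^ (-(d:ℝ) - ε)) with hg
  have hex : ∀ α : ↥A, ∃ k : ℕ, dist y (α : E) < 2 ^ k :=
    fun α => pow_unbounded_of_one_lt _ one_lt_two
  set P : ↥A → ℕ := fun α => Nat.find (hex α) with hP
  have hPlt : ∀ α : ↥A, dist y (α : E) < 2 ^ (P α) := fun α => Nat.find_spec (hex α)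
  have hPge : ∀ α, (2:ℝ) ^ (P α) / 2 ≤ 1 + dist y (α : E) := by
    intro α
    have hd0 : (0:ℝ) ≤ dist y (α : E) := dist_nonneg
    rcases Nat.eq_zero_or_pos (P α) with h0 | hpos
    · rw [h0]
      norm_num
      linarith
    · have := Nat.find_min (hex α) (m := P α - 1) (show P α - 1 < P α by omega)
      push_neg at this
      have h2 : (2:ℝ) ^ (P α - 1) = 2 ^ (P α) / 2 := by
        rw [eq_div_iff (by norm_num : (2:ℝ) ≠ 0), ← pow_succ]
        congr 1
        omega
      rw [h2] at this
      linarith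
  -- constants
  set M : ℝ := C₁ * ((1 + c₀)/c₀) ^ d * 2 ^ ((d:ℝ) + ε) with hM
  have hM0 : 0 ≤ M := by positivity
  set r : ℝ := (2:ℝ) ^ (-ε) with hr
  have hr0 : 0 ≤ r := Real.rpow_nonneg (by norm_num) _
  have hr1 : r < 1 := Real.rpow_lt_one_of_one_lt_of_neg one_lt_two (by linarith)
  -- decompose
  have step1 : ∑' α : A, g α = ∑' k : ℕ, ∑' α : A, (if k = P α then g α else 0) := by
    rw [ENNReal.tsum_comm]
    refine tsum_congr fun α => ?_
    exact (tsum_ite_eq (P α) (fun _ => g α)).symm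
  rw [step1]
  -- per-block bound
  have step2 : ∀ k : ℕ, ∑' α : A, (if k = P α then g α else 0)
      ≤ ENNReal.ofReal (M * r ^ k) := by
    intro k
    set ck : ℝ := ((2:ℝ)^k / 2) ^ (-(d:ℝ) - ε) with hck
    have hck0 : 0 ≤ ck := Real.rpow_nonneg (by positivity) _
    set S : Set ↥A := {α : ↥A | dist y (α : E) ≤ 2 ^ k} with hS
    have hSfin : S.Finite := by
      have himg : (Subtype.val '' S) ⊆ A ∩ closedBall y (2 ^ k) := by
        rintro β ⟨α, hα, rfl⟩
        exact ⟨α.2, by simpa [hS, mem_closedBall, dist_comm] using hα⟩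
      have hfin2 := ((ball_count hd hc₀ hmult y (2^k) (by positivity)).1).subset himg
      exact (Set.Finite.of_finite_image hfin2 (Subtype.val_injective.injOn))
    have hScard : (S.ncard : ℝ) ≤ C₁ * ((2^k + c₀) / c₀) ^ d := by
      have h1 : S.ncard = (Subtype.val '' S).ncard :=
        (Set.ncard_image_of_injective S Subtype.val_injective).symm
      have himg : (Subtype.val '' S) ⊆ A ∩ closedBall y (2 ^ k) := by
        rintro β ⟨α, hα, rfl⟩
        exact ⟨α.2, by simpa [hS, mem_closedBall, dist_comm] using hα⟩
      have h2 := Set.ncard_le_ncard himg (ball_count hd hc₀ hmult y (2^k) (by positivity)).1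
      have h3 := (ball_count hd hc₀ hmult y (2^k) (by positivity)).2
      rw [h1]
      calc ((Subtype.val '' S).ncard : ℝ) ≤ ((A ∩ closedBall y (2^k)).ncard : ℝ) := by exact_mod_cast h2
        _ ≤ C₁ * ((2^k + c₀) / c₀) ^ d := h3
    have hpt : ∀ α : ↥A, (if k = P α then g α else 0)
        ≤ S.indicator (fun _ => ENNReal.ofReal ck) α := by
      intro α
      by_cases hk : k = P α
      · rw [if_pos hk]
        have hmem : α ∈ S := by
          have := hPlt α
          rw [← hk] at this
          exact le_of_lt this
        rw [Set.indicator_of_mem hmem]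
        refine ENNReal.ofReal_le_ofReal ?_
        have h1 : (2:ℝ)^k / 2 ≤ 1 + dist y (α : E) := by rw [hk]; exact hPge α
        exact Real.rpow_le_rpow_of_nonpos (by positivity) h1 (by push_cast; nlinarith [hε, Nat.cast_nonneg (α := ℝ) d])
      · rw [if_neg hk]
        exact zero_le
    calc ∑' α : A, (if k = P α then g α else 0)
        ≤ ∑' α : A, S.indicator (fun _ => ENNReal.ofReal ck) α := ENNReal.tsum_le_tsum hpt
      _ = ∑ α ∈ hSfin.toFinset, S.indicator (fun _ => ENNReal.ofReal ck) α := by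
          refine tsum_eq_sum fun α hα => ?_
          exact Set.indicator_of_notMem (by simpa using hα) _
      _ ≤ (hSfin.toFinset.card : ℝ≥0∞) * ENNReal.ofReal ck := by
          rw [← nsmul_eq_mul]
          refine Finset.sum_le_card_nsmul _ _ _ fun α _ => ?_
          by_cases hα : α ∈ S
          · rw [Set.indicator_of_mem hα]
          · rw [Set.indicator_of_notMem hα]; exact zero_le
      _ ≤ ENNReal.ofReal (C₁ * ((2^k + c₀) / c₀) ^ d) * ENNReal.ofReal ck := by
          refine mul_le_mul_left ?_ _
          rw [← ENNReal.ofReal_natCast]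
          refine ENNReal.ofReal_le_ofReal ?_
          rwa [← Set.ncard_eq_toFinset_card _ hSfin]
      _ ≤ ENNReal.ofReal (M * r ^ k) := by
          rw [← ENNReal.ofReal_mul (by positivity)]
          exact ENNReal.ofReal_le_ofReal (block_bound trivial hc₀ hC₁ hε k)
  -- geometric sum
  calc ∑' k : ℕ, ∑' α : A, (if k = P α then g α else 0)
      ≤ ∑' k : ℕ, ENNReal.ofReal (M * r ^ k) := ENNReal.tsum_le_tsum step2
    _ = ENNReal.ofReal M * ∑' k : ℕ, (ENNReal.ofReal r) ^ k := by
        rw [← ENNReal.tsum_mul_left]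
        refine tsum_congr fun k => ?_
        rw [ENNReal.ofReal_mul hM0, ENNReal.ofReal_pow hr0]
    _ = ENNReal.ofReal M * (1 - ENNReal.ofReal r)⁻¹ := by rw [ENNReal.tsum_geometric]
    _ = ENNReal.ofReal (M * (1 - r)⁻¹) := by
        rw [ENNReal.ofReal_mul hM0, ENNReal.ofReal_inv_of_pos (by linarith), ENNReal.ofReal_sub _ hr0, ENNReal.ofReal_one]

end Aux

theorem stmt3 (d : ℕ) (hd : 0 < d) (m₂ : ℝ) (hm : 0 < m₂) (c₀ C₁ C₀ : ℝ) (a : ℝ)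
    (ha : 0 ≤ a) (ham : a < m₂) :
    ∃ C : ℝ, 0 < C ∧
      ∀ A : Set (EuclideanSpace ℝ (Fin d)), QuasiUniform A c₀ C₁ →
      ∀ ψ : EuclideanSpace ℝ (Fin d) → EuclideanSpace ℝ (Fin d) → ℝ,
        (∀ α ∈ A, ∀ x, |ψ α x| ≤ C₀ * (1 + ‖x - α‖) ^ (-(d : ℝ) - m₂)) →
      ∀ h : ℝ, 0 < h → h < 1 →
      ∀ x : EuclideanSpace ℝ (Fin d),
        ∑' α : A, ENNReal.ofReal
            (|ψ α (h⁻¹ • x)| * (‖x - h • (α : EuclideanSpace ℝ (Fin d))‖ + h) ^ a)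
          ≤ ENNReal.ofReal (C * h ^ a) := by
  have hε : (0:ℝ) < m₂ - a := by linarith
  set S' : ℝ := |C₁| * ((1 + |c₀|)/|c₀|) ^ d * 2 ^ ((d:ℝ) + (m₂ - a)) * (1 - 2 ^ (-(m₂ - a)))⁻¹
    with hS'
  have hgeom : (0:ℝ) < 1 - 2 ^ (-(m₂ - a)) := by
    have := Real.rpow_lt_one_of_one_lt_of_neg (x := 2) one_lt_two (by linarith : -(m₂ - a) < 0)
    linarith
  have hS'0 : 0 ≤ S' := by
    rw [hS']
    have h1 : (0:ℝ) ≤ |C₁| := abs_nonneg _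
    have h2 : (0:ℝ) ≤ ((1 + |c₀|)/|c₀|) ^ d := by positivity
    have h3 : (0:ℝ) < (2:ℝ) ^ ((d:ℝ) + (m₂ - a)) := Real.rpow_pos_of_pos two_pos _
    have h4 : (0:ℝ) < (1 - 2 ^ (-(m₂ - a)))⁻¹ := inv_pos.mpr hgeom
    positivity
  refine ⟨|C₀| * S' + 1, by positivity, ?_⟩
  rintro A ⟨hcnt, hcov, hmult⟩ ψ hψ h hh0 hh1 x
  -- c₀ is positive
  have hc₀ : 0 < c₀ := by
    by_contra hle
    push_neg at hle
    have hAuniv : A = Set.univ := by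
      ext z
      simp only [Set.mem_univ, iff_true]
      obtain ⟨α, hαA, hdist⟩ := hcov z
      have hz : dist z α = 0 := le_antisymm (hdist.trans hle) dist_nonneg
      rwa [dist_eq_zero.mp hz]
    have hinj : Function.Injective
        (fun t : ℝ => EuclideanSpace.single (⟨0, hd⟩ : Fin d) t) := by
      intro s t hst
      simpa using congrArg (fun v : EuclideanSpace ℝ (Fin d) => v ⟨0, hd⟩) hst
    rw [hAuniv, Set.countable_univ_iff] at hcnt
    exact (not_countable_iff.mpr inferInstance).elim hinj.countable
  have hC₁0 : 0 ≤ C₁ := le_trans (by positivity) (hmult x).2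
  have habs : S' = (C₁ * ((1 + c₀)/c₀) ^ d * 2 ^ ((d:ℝ) + (m₂ - a))) * (1 - 2 ^ (-(m₂ - a)))⁻¹ := by
    rw [hS', abs_of_pos hc₀, abs_of_nonneg hC₁0]
  set y : EuclideanSpace ℝ (Fin d) := h⁻¹ • x with hy
  have hha : (0:ℝ) ≤ h ^ a := Real.rpow_nonneg hh0.le _
  have hkey : ∀ α : ↥A, ENNReal.ofReal
      (|ψ ↑α y| * (‖x - h • (↑α : EuclideanSpace ℝ (Fin d))‖ + h) ^ a)
      ≤ ENNReal.ofReal (|C₀| * h ^ a)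
        * ENNReal.ofReal ((1 + dist y (↑α : EuclideanSpace ℝ (Fin d))) ^ (-(d:ℝ) - (m₂ - a))) := by
    intro α
    set t : ℝ := ‖y - (↑α : EuclideanSpace ℝ (Fin d))‖ with htdef
    have ht0 : 0 ≤ t := norm_nonneg _
    have hnorm : ‖x - h • (↑α : EuclideanSpace ℝ (Fin d))‖ = h * t := by
      have hx : x - h • (↑α : EuclideanSpace ℝ (Fin d)) = h • (y - ↑α) := by
        rw [smul_sub, hy, smul_inv_smul₀ (ne_of_gt hh0)]
      rw [hx, norm_smul, Real.norm_eq_abs, abs_of_pos hh0]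
    have hb' : |ψ ↑α y| ≤ |C₀| * (1 + t) ^ (-(d:ℝ) - m₂) :=
      (hψ ↑α α.2 y).trans
        (mul_le_mul_of_nonneg_right (le_abs_self _) (Real.rpow_nonneg (by linarith) _))
    have hfac : (‖x - h • (↑α : EuclideanSpace ℝ (Fin d))‖ + h) ^ a = h ^ a * (1 + t) ^ a := by
      rw [hnorm, show h * t + h = h * (1 + t) by ring, Real.mul_rpow hh0.le (by linarith)]
    have hmain : |ψ ↑α y| * (‖x - h • (↑α : EuclideanSpace ℝ (Fin d))‖ + h) ^ a
        ≤ (|C₀| * h ^ a) * (1 + t) ^ (-(d:ℝ) - (m₂ - a)) := by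
      rw [hfac]
      have h1 : |ψ ↑α y| * (h ^ a * (1 + t) ^ a)
          ≤ (|C₀| * (1 + t) ^ (-(d:ℝ) - m₂)) * (h ^ a * (1 + t) ^ a) := by
        refine mul_le_mul_of_nonneg_right hb' ?_
        have := Real.rpow_nonneg (by linarith : (0:ℝ) ≤ 1 + t) a
        positivity
      refine h1.trans (le_of_eq ?_)
      rw [show (|C₀| * (1 + t) ^ (-(d:ℝ) - m₂)) * (h ^ a * (1 + t) ^ a)
          = (|C₀| * h ^ a) * ((1 + t) ^ (-(d:ℝ) - m₂) * (1 + t) ^ a) by ring,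
        ← Real.rpow_add (by linarith : (0:ℝ) < 1 + t)]
      congr 2
      ring
    rw [← ENNReal.ofReal_mul (by positivity)]
    refine ENNReal.ofReal_le_ofReal ?_
    rw [dist_eq_norm]
    exact hmain
  calc ∑' α : A, ENNReal.ofReal
        (|ψ ↑α (h⁻¹ • x)| * (‖x - h • (↑α : EuclideanSpace ℝ (Fin d))‖ + h) ^ a)
      ≤ ∑' α : A, ENNReal.ofReal (|C₀| * h ^ a)
          * ENNReal.ofReal ((1 + dist y (↑α : EuclideanSpace ℝ (Fin d))) ^ (-(d:ℝ) - (m₂ - a))) :=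
        ENNReal.tsum_le_tsum hkey
    _ = ENNReal.ofReal (|C₀| * h ^ a)
        * ∑' α : A, ENNReal.ofReal ((1 + dist y (↑α : EuclideanSpace ℝ (Fin d))) ^ (-(d:ℝ) - (m₂ - a))) :=
        ENNReal.tsum_mul_left
    _ ≤ ENNReal.ofReal (|C₀| * h ^ a)
        * ENNReal.ofReal ((C₁ * ((1 + c₀)/c₀) ^ d * 2 ^ ((d:ℝ) + (m₂ - a))) * (1 - 2 ^ (-(m₂ - a)))⁻¹) :=
        mul_le_mul_right (tsum_bound hd hc₀ hC₁0 hmult hε y) _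
    _ ≤ ENNReal.ofReal ((|C₀| * S' + 1) * h ^ a) := by
        rw [← habs, ← ENNReal.ofReal_mul (by positivity)]
        refine ENNReal.ofReal_le_ofReal ?_
        nlinarith [abs_nonneg C₀, mul_nonneg (mul_nonneg (abs_nonneg C₀) hha) hS'0]
end

section
/- Let d ≥ 1, a ≥ 0, 1 ≤ p < ∞, and let f ∈ L^p(ℝ^d) satisfy sup_{M ≥ 1} M^a (∫_{‖x‖ ≥ M} |f(x)|^p dx)^{1/p} ≤ C_1 < ∞. Let A ⊂ ℝ^d be quasi-uniformly distributed and let S_α be linear functionals with |S_α g| ≤ C ∫_{B_1(α)} |g(y)| dy. Then for h ∈ (0,1) and n ∈ ℕ with n^{1/d} h ≥ 2, h^d ∑_{α ∈ A, ‖α‖ ≥ n^{1/d}} |S_α(σ_h f)|^p ≤ C' C_1^p (n^{1/d} h)^{−ap}, where σ_h f(·) = f(h·) and C' depends only on C, p, d, a and the geometric constants of A. -/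
open MeasureTheory Metric
open scoped ENNReal

lemma auxA {ι : Type*} (g : ι → ℝ≥0∞) (F : Set ι) (hF : F.Finite)
    (hg1 : ∀ i, g i ≤ 1) (hsupp : ∀ i, g i ≠ 0 → i ∈ F) :
    ∑' i, g i ≤ (F.ncard : ℝ≥0∞) := by
  have h1 : ∑' i, g i ≤ ∑' i, F.indicator (fun _ => (1:ℝ≥0∞)) i := by
    refine ENNReal.tsum_le_tsum (fun i => ?_)
    by_cases h : i ∈ F
    · simpa [Set.indicator_of_mem h] using hg1 i
    · have : g i = 0 := by by_contra hc; exact h (hsupp i hc)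
      simp [Set.indicator_of_notMem h, this]
  refine h1.trans (le_of_eq ?_)
  rw [← tsum_subtype F (fun _ => (1:ℝ≥0∞))]
  haveI := hF.fintype
  rw [tsum_fintype]
  simp [Finset.card_univ, ← Set.ncard_eq_toFinset_card', Set.toFinset_card]

lemma auxB {d : ℕ} {A : Set (EuclideanSpace ℝ (Fin d))} {c₀ C₁ : ℝ}
    (hQU : QuasiUniform A c₀ C₁) (hc₀ : 0 < c₀) (Q : EuclideanSpace ℝ (Fin d) → Prop)
    (x : EuclideanSpace ℝ (Fin d)) :
    ∑' (α : {α : EuclideanSpace ℝ (Fin d) // α ∈ A ∧ Q α}),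
        (if dist x α.1 ≤ 1 then (1:ℝ≥0∞) else 0)
      ≤ ENNReal.ofReal (C₁ * (volume (closedBall (0:EuclideanSpace ℝ (Fin d)) (1+c₀))).toReal
          / (volume (closedBall (0:EuclideanSpace ℝ (Fin d)) c₀)).toReal) := by
  classical
  haveI : Countable {α : EuclideanSpace ℝ (Fin d) // α ∈ A ∧ Q α} :=
    (hQU.1.mono (fun y hy => hy.1 : {α : EuclideanSpace ℝ (Fin d) | α ∈ A ∧ Q α} ⊆ A)).to_subtype
  set v : ℝ≥0∞ := volume (closedBall (0:EuclideanSpace ℝ (Fin d)) c₀) with hv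
  set V : ℝ≥0∞ := volume (closedBall (0:EuclideanSpace ℝ (Fin d)) (1+c₀)) with hV
  have hv0 : v ≠ 0 := (measure_closedBall_pos volume 0 hc₀).ne'
  have hvtop : v ≠ ⊤ := measure_closedBall_lt_top.ne
  have hVtop : V ≠ ⊤ := measure_closedBall_lt_top.ne
  have hC₁0 : 0 ≤ C₁ := le_trans (Nat.cast_nonneg _) ((hQU.2.2 x).2)
  set S := ∑' (α : {α : EuclideanSpace ℝ (Fin d) // α ∈ A ∧ Q α}),
      (if dist x α.1 ≤ 1 then (1:ℝ≥0∞) else 0) with hS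
  have key : v * S ≤ ENNReal.ofReal C₁ * V := by
    have e1 : v * S = ∑' (α : {α : EuclideanSpace ℝ (Fin d) // α ∈ A ∧ Q α}),
        (if dist x α.1 ≤ 1 then v else 0) := by
      rw [hS, ← ENNReal.tsum_mul_left]
      congr 1; funext α; split_ifs <;> simp
    have e2 : ∀ (α : {α : EuclideanSpace ℝ (Fin d) // α ∈ A ∧ Q α}),
        (if dist x α.1 ≤ 1 then v else 0)
          = ∫⁻ z, (if dist x α.1 ≤ 1
              then (closedBall α.1 c₀).indicator (fun _ => (1:ℝ≥0∞)) z else 0) ∂volume := by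
      intro α; split_ifs with h
      · rw [lintegral_indicator_const measurableSet_closedBall,
          Measure.addHaar_closedBall_center, one_mul]
      · simp
    have e3 : v * S = ∫⁻ z, ∑' (α : {α : EuclideanSpace ℝ (Fin d) // α ∈ A ∧ Q α}),
        (if dist x α.1 ≤ 1
          then (closedBall α.1 c₀).indicator (fun _ => (1:ℝ≥0∞)) z else 0) ∂volume := by
      rw [e1]
      simp_rw [e2]
      rw [← lintegral_tsum]
      intro α
      split_ifs
      · exact (measurable_const.indicator measurableSet_closedBall).aemeasurable
      · exact aemeasurable_const
    rw [e3]
    have bound : ∀ z : EuclideanSpace ℝ (Fin d),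
        (∑' (α : {α : EuclideanSpace ℝ (Fin d) // α ∈ A ∧ Q α}),
        (if dist x α.1 ≤ 1
          then (closedBall α.1 c₀).indicator (fun _ => (1:ℝ≥0∞)) z else 0))
        ≤ (closedBall x (1+c₀)).indicator (fun _ => ENNReal.ofReal C₁) z := by
      intro z
      by_cases hz : z ∈ closedBall x (1+c₀)
      · rw [Set.indicator_of_mem hz]
        have hFfin := (hQU.2.2 z).1
        set F' : Set {α : EuclideanSpace ℝ (Fin d) // α ∈ A ∧ Q α} :=
          Subtype.val ⁻¹' {β | β ∈ A ∧ dist z β ≤ c₀} with hF'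
        have h1 := auxA (ι := {α : EuclideanSpace ℝ (Fin d) // α ∈ A ∧ Q α})
          (fun α => if dist x α.1 ≤ 1
            then (closedBall α.1 c₀).indicator (fun _ => (1:ℝ≥0∞)) z else 0)
          F' (hFfin.preimage Subtype.val_injective.injOn)
          (fun α => by
            split_ifs
            exacts [Set.indicator_apply_le' (fun _ => le_rfl) (fun _ => zero_le_one), zero_le_one])
          (fun α hα => by
            rw [Set.mem_preimage]
            split_ifs at hα with h1
            · have hmem : z ∈ closedBall α.1 c₀ := by
                by_contra hc
                exact hα (Set.indicator_of_notMem hc _)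
              exact ⟨α.2.1, mem_closedBall.1 hmem⟩
            · exact absurd rfl hα)
        refine h1.trans ?_
        have hcard : ((F'.ncard : ℝ)) ≤ C₁ := by
          refine le_trans ?_ (hQU.2.2 z).2
          have h2 : F'.ncard = (Subtype.val '' F').ncard :=
            (Set.ncard_image_of_injective _ Subtype.val_injective).symm
          rw [h2]
          exact_mod_cast Nat.cast_le.2 (Set.ncard_le_ncard (Set.image_preimage_subset _ _) hFfin)
        calc ((F'.ncard : ℝ≥0∞))
            = ENNReal.ofReal ((F'.ncard : ℝ)) := by rw [ENNReal.ofReal_natCast]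
          _ ≤ ENNReal.ofReal C₁ := ENNReal.ofReal_le_ofReal hcard
      · rw [Set.indicator_of_notMem hz]
        have hzero : ∀ (α : {α : EuclideanSpace ℝ (Fin d) // α ∈ A ∧ Q α}),
            (if dist x α.1 ≤ 1
              then (closedBall α.1 c₀).indicator (fun _ => (1:ℝ≥0∞)) z else 0) = 0 := by
          intro α
          split_ifs with h1
          · refine Set.indicator_of_notMem ?_ _
            intro hmem
            refine hz (mem_closedBall.2 ?_)
            calc dist z x ≤ dist z α.1 + dist α.1 x := dist_triangle _ _ _
              _ ≤ c₀ + 1 := add_le_add (mem_closedBall.1 hmem) (dist_comm x α.1 ▸ h1)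
              _ = 1 + c₀ := add_comm _ _
          · rfl
        simp [hzero]
    calc (∫⁻ z, ∑' (α : {α : EuclideanSpace ℝ (Fin d) // α ∈ A ∧ Q α}),
        (if dist x α.1 ≤ 1
          then (closedBall α.1 c₀).indicator (fun _ => (1:ℝ≥0∞)) z else 0) ∂volume)
        ≤ ∫⁻ z, (closedBall x (1+c₀)).indicator (fun _ => ENNReal.ofReal C₁) z ∂volume :=
          lintegral_mono bound
      _ = ENNReal.ofReal C₁ * V := by
          rw [lintegral_indicator_const measurableSet_closedBall,
            Measure.addHaar_closedBall_center]
  have hrw : ENNReal.ofReal (C₁ * V.toReal / v.toReal) = ENNReal.ofReal C₁ * V / v := by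
    rw [ENNReal.ofReal_div_of_pos (ENNReal.toReal_pos hv0 hvtop),
      ENNReal.ofReal_mul hC₁0, ENNReal.ofReal_toReal hVtop, ENNReal.ofReal_toReal hvtop]
  rw [hrw, ENNReal.le_div_iff_mul_le (Or.inl hv0) (Or.inl hvtop), mul_comm]
  exact key

lemma auxHolder {α : Type*} [MeasurableSpace α] (μ : Measure α) (g : α → ℝ)
    (hg : AEStronglyMeasurable g μ) {p : ℝ} (hp : 1 ≤ p) :
    ∫⁻ x, ENNReal.ofReal |g x| ∂μ
      ≤ (∫⁻ x, ENNReal.ofReal (|g x| ^ p) ∂μ) ^ (1/p) * (μ Set.univ) ^ (1 - 1/p) := by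
  have h0 := eLpNorm'_le_eLpNorm'_mul_rpow_measure_univ (p := 1) (q := p) one_pos hp hg
  simp only [eLpNorm'] at h0
  have e1 : ∀ x : α, (‖g x‖ₑ : ℝ≥0∞) = ENNReal.ofReal |g x| := fun x => by
    rw [← ofReal_norm_eq_enorm, Real.norm_eq_abs]
  have e2 : ∀ x : α, ENNReal.ofReal (|g x| ^ p) = ENNReal.ofReal |g x| ^ p := fun x =>
    (ENNReal.ofReal_rpow_of_nonneg (abs_nonneg _) (le_trans zero_le_one hp)).symm
  simp only [ENNReal.rpow_one, one_div, e1] at h0 ⊢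
  simpa [e2] using h0

lemma auxCOV {d : ℕ} (F : EuclideanSpace ℝ (Fin d) → ℝ≥0∞) (hF : AEMeasurable F volume)
    {h : ℝ} (hh : 0 < h) (α : EuclideanSpace ℝ (Fin d)) :
    ∫⁻ y in closedBall α 1, F (h • y) ∂volume
      = ENNReal.ofReal ((h ^ d)⁻¹) * ∫⁻ z in closedBall (h • α) h, F z ∂volume := by
  have hd0 : (h : ℝ) ≠ 0 := hh.ne'
  have hmem : ∀ y : EuclideanSpace ℝ (Fin d),
      (h • y ∈ closedBall (h • α) h ↔ y ∈ closedBall α 1) := by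
    intro y
    simp only [mem_closedBall, dist_smul₀, Real.norm_eq_abs, abs_of_pos hh]
    constructor
    · intro hle; nlinarith [dist_nonneg (x := y) (y := α)]
    · intro hle; nlinarith [dist_nonneg (x := y) (y := α)]
  set G : EuclideanSpace ℝ (Fin d) → ℝ≥0∞ := (closedBall (h • α) h).indicator F with hG
  have hGmeas : AEMeasurable G volume := hF.indicator measurableSet_closedBall
  have e1 : ∫⁻ y in closedBall α 1, F (h • y) ∂volume = ∫⁻ y, G (h • y) ∂volume := by
    rw [← lintegral_indicator measurableSet_closedBall]
    refine lintegral_congr fun y => ?_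
    by_cases hy : y ∈ closedBall α 1
    · rw [Set.indicator_of_mem hy, hG, Set.indicator_of_mem ((hmem y).2 hy)]
    · rw [Set.indicator_of_notMem hy, hG,
        Set.indicator_of_notMem (fun hc => hy ((hmem y).1 hc))]
  have e2 : ∫⁻ y, G (h • y) ∂volume
      = ∫⁻ z, G z ∂(Measure.map (fun y : EuclideanSpace ℝ (Fin d) => h • y) volume) := by
    refine (lintegral_map' ?_ (measurable_const_smul h).aemeasurable).symm
    rw [Measure.map_addHaar_smul volume hd0]
    exact hGmeas.smul_measure _
  have e3 : (Measure.map (fun y : EuclideanSpace ℝ (Fin d) => h • y) volume)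
      = ENNReal.ofReal ((h ^ d)⁻¹) • volume := by
    have := Measure.map_addHaar_smul (μ := volume) (E := EuclideanSpace ℝ (Fin d)) hd0
    rw [this, finrank_euclideanSpace_fin, abs_of_pos]
    positivity
  rw [e1, e2, e3, lintegral_smul_measure, hG, lintegral_indicator measurableSet_closedBall, smul_eq_mul]

theorem stmt12 (d : ℕ) (hd : 0 < d) (p a C c₀ C₁ : ℝ) (hp : 1 ≤ p) (ha : 0 ≤ a)
    (hC : 0 < C) :
    ∃ C' : ℝ, 0 < C' ∧
      ∀ A : Set (EuclideanSpace ℝ (Fin d)), QuasiUniform A c₀ C₁ →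
      ∀ S : EuclideanSpace ℝ (Fin d) → (EuclideanSpace ℝ (Fin d) → ℝ) → ℝ,
        (∀ α ∈ A, ∀ g : EuclideanSpace ℝ (Fin d) → ℝ, IntegrableOn g (closedBall α 1) →
          |S α g| ≤ C * ∫ y in closedBall α 1, |g y|) →
      ∀ f : EuclideanSpace ℝ (Fin d) → ℝ, MemLp f (ENNReal.ofReal p) volume →
      ∀ C₁f : ℝ, 0 < C₁f →
        (∀ M : ℝ, 1 ≤ M →
          ∫⁻ x in {x : EuclideanSpace ℝ (Fin d) | M ≤ ‖x‖}, ENNReal.ofReal (|f x| ^ p) ≤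
            ENNReal.ofReal ((C₁f * M ^ (-a)) ^ p)) →
      ∀ (h : ℝ) (n : ℕ), 0 < h → h < 1 → 2 ≤ (n : ℝ) ^ ((d : ℝ)⁻¹) * h →
        ENNReal.ofReal (h ^ (d : ℝ)) *
            ∑' α : {α : EuclideanSpace ℝ (Fin d) // α ∈ A ∧ (n : ℝ) ^ ((d : ℝ)⁻¹) ≤ ‖α‖},
              ENNReal.ofReal (|S α (fun y => f (h • y))| ^ p)
          ≤ ENNReal.ofReal (C' * C₁f ^ p * ((n : ℝ) ^ ((d : ℝ)⁻¹) * h) ^ (-(a * p))) := by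
  classical
  have hp0 : (0:ℝ) < p := lt_of_lt_of_le one_pos hp
  set W : ℝ≥0∞ := volume (closedBall (0:EuclideanSpace ℝ (Fin d)) 1) with hW
  have hWtop : W ≠ ⊤ := measure_closedBall_lt_top.ne
  have hWr : 0 < W.toReal :=
    ENNReal.toReal_pos (measure_closedBall_pos volume 0 one_pos).ne' hWtop
  set Kr : ℝ := C₁ * (volume (closedBall (0:EuclideanSpace ℝ (Fin d)) (1+c₀))).toReal
      / (volume (closedBall (0:EuclideanSpace ℝ (Fin d)) c₀)).toReal with hKr
  set Kr' : ℝ := max Kr 1 with hKr'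
  have hKr'1 : (1:ℝ) ≤ Kr' := le_max_right _ _
  have hKr'0 : (0:ℝ) < Kr' := lt_of_lt_of_le one_pos hKr'1
  refine ⟨C ^ p * W.toReal ^ (p - 1) * Kr' * 2 ^ (a * p), ?_, ?_⟩
  · have h1 : (0:ℝ) < C ^ p := Real.rpow_pos_of_pos hC p
    have h2 : (0:ℝ) < W.toReal ^ (p-1) := Real.rpow_pos_of_pos hWr _
    have h3 : (0:ℝ) < (2:ℝ) ^ (a*p) := Real.rpow_pos_of_pos (by norm_num) _
    positivity
  intro A hQU S hS f hf C₁f hC₁f htail h n hh0 hh1 hB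
  set nr : ℝ := (n:ℝ) ^ ((d : ℝ)⁻¹) with hnr
  set B : ℝ := nr * h with hBdef
  have hBpos : (0:ℝ) < B := lt_of_lt_of_le two_pos hB
  have hnrpos : (0:ℝ) < nr := by
    rcases lt_or_ge 0 nr with h' | h'
    · exact h'
    · nlinarith
  have hB2 : (1:ℝ) ≤ B/2 := by linarith
  -- c₀ is positive
  have hc₀ : 0 < c₀ := by
    by_contra hcon
    push_neg at hcon
    have hA : ∀ x : EuclideanSpace ℝ (Fin d), x ∈ A := by
      intro x
      obtain ⟨α, hα, hdist⟩ := hQU.2.1 x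
      have h0 : dist x α = 0 := le_antisymm (hdist.trans hcon) dist_nonneg
      rw [dist_eq_zero] at h0
      rwa [h0]
    have hcnt : Countable (EuclideanSpace ℝ (Fin d)) := by
      have he : A = Set.univ := Set.eq_univ_of_forall hA
      have := hQU.1
      rw [he] at this
      exact Set.countable_univ_iff.mp this
    have hv : (EuclideanSpace.single (⟨0, hd⟩ : Fin d) (1:ℝ)) ≠ 0 := by
      intro h0
      have := congrArg (fun v : EuclideanSpace ℝ (Fin d) => v (⟨0, hd⟩ : Fin d)) h0
      simp [EuclideanSpace.single_apply] at this
    have hunc : Uncountable (EuclideanSpace ℝ (Fin d)) :=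
      (smul_left_injective ℝ hv).uncountable
    exact @not_uncountable _ hcnt hunc
  -- notation
  set F : EuclideanSpace ℝ (Fin d) → ℝ≥0∞ := fun z => ENNReal.ofReal (|f z| ^ p) with hF
  have hfm : AEStronglyMeasurable f volume := hf.1
  have habs : AEMeasurable (fun z => |f z|) volume := by
    have := hfm.norm.aemeasurable
    simpa [Real.norm_eq_abs] using this
  have hFmeas : AEMeasurable F volume := by
    have h1 : AEMeasurable (fun z => ENNReal.ofReal (|f z|)) volume := habs.ennreal_ofReal
    have h2 : AEMeasurable (fun z => (ENNReal.ofReal (|f z|)) ^ p) volume :=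
      h1.pow aemeasurable_const
    refine h2.congr (Filter.Eventually.of_forall fun z => ?_)
    exact (ENNReal.ofReal_rpow_of_nonneg (abs_nonneg _) hp0.le)
  set tail : Set (EuclideanSpace ℝ (Fin d)) := {z | B/2 ≤ ‖z‖} with htailset
  have htail_meas : MeasurableSet tail :=
    (isClosed_le continuous_const continuous_norm).measurableSet
  have htailbound : ∫⁻ z in tail, F z ∂volume ≤ ENNReal.ofReal ((C₁f * (B/2) ^ (-a)) ^ p) :=
    htail (B/2) hB2
  have hsub : ∀ β : EuclideanSpace ℝ (Fin d), nr ≤ ‖β‖ →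
      closedBall (h • β) h ⊆ tail := by
    intro β hβ z hz
    rw [mem_closedBall] at hz
    have h1 : ‖(h:ℝ) • β‖ = h * ‖β‖ := by
      rw [norm_smul, Real.norm_eq_abs, abs_of_pos hh0]
    have h2 : ‖(h:ℝ) • β‖ ≤ ‖z‖ + dist z ((h:ℝ) • β) := by
      have := dist_triangle (0:EuclideanSpace ℝ (Fin d)) z ((h:ℝ) • β)
      simpa [dist_zero_left, dist_comm] using this
    have h3 : h * nr ≤ h * ‖β‖ := by nlinarith
    show B/2 ≤ ‖z‖
    have hBe : B = h * nr := by rw [hBdef]; ring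
    nlinarith
  haveI hcntI : Countable {α : EuclideanSpace ℝ (Fin d) // α ∈ A ∧ nr ≤ ‖α‖} :=
    (hQU.1.mono (fun y hy => hy.1 :
      {α : EuclideanSpace ℝ (Fin d) | α ∈ A ∧ nr ≤ ‖α‖} ⊆ A)).to_subtype
  set g : EuclideanSpace ℝ (Fin d) → ℝ := fun y => f (h • y) with hgdef
  have hgm : AEStronglyMeasurable g volume := by
    have := hfm.comp_quasiMeasurePreserving
      (Measure.quasiMeasurePreserving_smul (μ := volume) hh0.ne')
    exact this
  have hCOV : ∀ β : EuclideanSpace ℝ (Fin d),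
      ∫⁻ y in closedBall β 1, ENNReal.ofReal (|g y| ^ p) ∂volume
        = ENNReal.ofReal ((h ^ d)⁻¹) * ∫⁻ z in closedBall (h • β) h, F z ∂volume := by
    intro β
    exact auxCOV F hFmeas hh0 β
  have hJle : ∀ β : EuclideanSpace ℝ (Fin d), nr ≤ ‖β‖ →
      ∫⁻ z in closedBall (h • β) h, F z ∂volume
        ≤ ENNReal.ofReal ((C₁f * (B/2) ^ (-a)) ^ p) := by
    intro β hβ
    exact (lintegral_mono_set (hsub β hβ)).trans htailbound
  have hg_int : ∀ β : EuclideanSpace ℝ (Fin d), nr ≤ ‖β‖ →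
      IntegrableOn g (closedBall β 1) volume := by
    intro β hβ
    refine ⟨hgm.restrict, ?_⟩
    rw [hasFiniteIntegral_iff_norm]
    have e1 : ∀ y, ENNReal.ofReal ‖g y‖ = ENNReal.ofReal |g y| := fun y => by
      rw [Real.norm_eq_abs]
    calc ∫⁻ y in closedBall β 1, ENNReal.ofReal ‖g y‖ ∂volume
        = ∫⁻ y in closedBall β 1, ENNReal.ofReal |g y| ∂volume := by simp_rw [e1]
      _ ≤ (∫⁻ y in closedBall β 1, ENNReal.ofReal (|g y| ^ p) ∂volume) ^ (1/p)
            * ((volume.restrict (closedBall β 1)) Set.univ) ^ (1 - 1/p) :=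
          auxHolder _ g hgm.restrict hp
      _ < ⊤ := by
          rw [Measure.restrict_apply_univ, hCOV β]
          refine ENNReal.mul_lt_top ?_ ?_
          · refine ENNReal.rpow_lt_top_of_nonneg (by positivity) ?_
            exact (ENNReal.mul_lt_top ENNReal.ofReal_lt_top
              ((hJle β hβ).trans_lt ENNReal.ofReal_lt_top)).ne
          · refine ENNReal.rpow_lt_top_of_nonneg ?_ measure_closedBall_lt_top.ne
            rw [sub_nonneg]
            exact div_le_one_of_le₀ hp hp0.le
  have key : ∀ α : {α : EuclideanSpace ℝ (Fin d) // α ∈ A ∧ nr ≤ ‖α‖},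
      ENNReal.ofReal (|S α.1 g| ^ p)
        ≤ (ENNReal.ofReal (C ^ p) * W ^ (p-1)) *
          (ENNReal.ofReal ((h ^ d)⁻¹) * ∫⁻ z in closedBall (h • α.1) h, F z ∂volume) := by
    intro α
    obtain ⟨hαA, hαn⟩ := α.2
    have hint := hg_int α.1 hαn
    have hSb := hS α.1 hαA g hint
    set t : ℝ := ∫ y in closedBall α.1 1, |g y| with ht
    have ht0 : 0 ≤ t := integral_nonneg (fun y => abs_nonneg _)
    have step1 : ENNReal.ofReal (|S α.1 g| ^ p)
        ≤ ENNReal.ofReal ((C * t) ^ p) :=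
      ENNReal.ofReal_le_ofReal (Real.rpow_le_rpow (abs_nonneg _) hSb hp0.le)
    have step2 : ENNReal.ofReal ((C * t) ^ p)
        = ENNReal.ofReal (C ^ p) * ENNReal.ofReal t ^ p := by
      rw [Real.mul_rpow hC.le ht0, ENNReal.ofReal_mul (Real.rpow_nonneg hC.le p),
        ENNReal.ofReal_rpow_of_nonneg ht0 hp0.le]
    set X : ℝ≥0∞ := ∫⁻ y in closedBall α.1 1, ENNReal.ofReal (|g y| ^ p) ∂volume with hX
    have hL : ENNReal.ofReal t ≤ ∫⁻ y in closedBall α.1 1, ENNReal.ofReal |g y| ∂volume := by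
      rw [ht, ofReal_integral_eq_lintegral_ofReal hint.abs
        (Filter.Eventually.of_forall fun y => abs_nonneg _)]
    have hH := auxHolder (volume.restrict (closedBall α.1 1)) g hgm.restrict hp
    rw [Measure.restrict_apply_univ, Measure.addHaar_closedBall_center] at hH
    have step3 : ENNReal.ofReal t ^ p ≤ X * W ^ (p-1) := by
      have h1 : ENNReal.ofReal t ≤ X ^ (1/p) * W ^ (1 - 1/p) := le_trans hL hH
      have h2 := ENNReal.rpow_le_rpow h1 hp0.le
      refine h2.trans (le_of_eq ?_)
      rw [ENNReal.mul_rpow_of_nonneg _ _ hp0.le, ← ENNReal.rpow_mul, ← ENNReal.rpow_mul,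
        one_div_mul_cancel hp0.ne', ENNReal.rpow_one]
      congr 1
      field_simp
    calc ENNReal.ofReal (|S α.1 g| ^ p) ≤ ENNReal.ofReal (C ^ p) * ENNReal.ofReal t ^ p :=
          step2 ▸ step1
      _ ≤ ENNReal.ofReal (C ^ p) * (X * W ^ (p-1)) := by
          exact mul_le_mul_right step3 _
      _ = (ENNReal.ofReal (C ^ p) * W ^ (p-1)) *
          (ENNReal.ofReal ((h ^ d)⁻¹) * ∫⁻ z in closedBall (h • α.1) h, F z ∂volume) := by
          rw [hX, hCOV α.1]
          ring
  have hsum : ∑' (α : {α : EuclideanSpace ℝ (Fin d) // α ∈ A ∧ nr ≤ ‖α‖}),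
      ∫⁻ z in closedBall (h • α.1) h, F z ∂volume
        ≤ ENNReal.ofReal Kr' * ENNReal.ofReal ((C₁f * (B/2) ^ (-a)) ^ p) := by
    have e1 : ∀ α : {α : EuclideanSpace ℝ (Fin d) // α ∈ A ∧ nr ≤ ‖α‖},
        ∫⁻ z in closedBall (h • α.1) h, F z ∂volume
          = ∫⁻ z, (closedBall (h • α.1) h).indicator F z ∂volume := fun α =>
      (lintegral_indicator measurableSet_closedBall F).symm
    rw [tsum_congr e1, ← lintegral_tsum (fun α => hFmeas.indicator measurableSet_closedBall)]
    have hiff : ∀ (z : EuclideanSpace ℝ (Fin d)) (β : EuclideanSpace ℝ (Fin d)),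
        (z ∈ closedBall (h • β) h ↔ dist (h⁻¹ • z) β ≤ 1) := by
      intro z β
      rw [mem_closedBall]
      have hd1 : dist (h⁻¹ • z) β = h⁻¹ * dist z (h • β) := by
        conv_lhs => rw [← inv_smul_smul₀ hh0.ne' β]
        rw [dist_smul₀, Real.norm_eq_abs, abs_of_pos (inv_pos.2 hh0)]
      rw [hd1, inv_mul_le_iff₀ hh0, mul_one]
    have hpt : ∀ z : EuclideanSpace ℝ (Fin d),
        (∑' (α : {α : EuclideanSpace ℝ (Fin d) // α ∈ A ∧ nr ≤ ‖α‖}),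
          (closedBall (h • α.1) h).indicator F z)
          ≤ ENNReal.ofReal Kr' * tail.indicator F z := by
      intro z
      have e2 : ∀ α : {α : EuclideanSpace ℝ (Fin d) // α ∈ A ∧ nr ≤ ‖α‖},
          (closedBall (h • α.1) h).indicator F z
            = F z * (if dist (h⁻¹ • z) α.1 ≤ 1 then (1:ℝ≥0∞) else 0) := by
        intro α
        by_cases hmem : z ∈ closedBall (h • α.1) h
        · rw [Set.indicator_of_mem hmem, if_pos ((hiff z α.1).1 hmem), mul_one]
        · rw [Set.indicator_of_notMem hmem, if_neg (fun hc => hmem ((hiff z α.1).2 hc)),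
            mul_zero]
      rw [tsum_congr e2, ENNReal.tsum_mul_left]
      by_cases hz : z ∈ tail
      · rw [Set.indicator_of_mem hz]
        have hB' := auxB hQU hc₀ (fun β => nr ≤ ‖β‖) (h⁻¹ • z)
        calc F z * ∑' (α : {α : EuclideanSpace ℝ (Fin d) // α ∈ A ∧ nr ≤ ‖α‖}),
              (if dist (h⁻¹ • z) α.1 ≤ 1 then (1:ℝ≥0∞) else 0)
            ≤ F z * ENNReal.ofReal Kr := mul_le_mul_right hB' _
          _ ≤ F z * ENNReal.ofReal Kr' :=
              mul_le_mul_right (ENNReal.ofReal_le_ofReal (le_max_left _ _)) _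
          _ = ENNReal.ofReal Kr' * F z := mul_comm _ _
      · have hzero : ∀ α : {α : EuclideanSpace ℝ (Fin d) // α ∈ A ∧ nr ≤ ‖α‖},
            (if dist (h⁻¹ • z) α.1 ≤ 1 then (1:ℝ≥0∞) else 0) = 0 := by
          intro α
          rw [if_neg]
          intro hc
          exact hz (hsub α.1 α.2.2 ((hiff z α.1).2 hc))
        rw [tsum_congr hzero]
        simp
    calc (∫⁻ z, ∑' (α : {α : EuclideanSpace ℝ (Fin d) // α ∈ A ∧ nr ≤ ‖α‖}),
          (closedBall (h • α.1) h).indicator F z ∂volume)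
        ≤ ∫⁻ z, ENNReal.ofReal Kr' * tail.indicator F z ∂volume := lintegral_mono hpt
      _ = ENNReal.ofReal Kr' * ∫⁻ z in tail, F z ∂volume := by
          rw [lintegral_const_mul' _ _ ENNReal.ofReal_ne_top, lintegral_indicator htail_meas]
      _ ≤ ENNReal.ofReal Kr' * ENNReal.ofReal ((C₁f * (B/2) ^ (-a)) ^ p) :=
          mul_le_mul_right htailbound _
  have hone : ENNReal.ofReal (h ^ (d:ℝ)) * ENNReal.ofReal ((h ^ d)⁻¹) = 1 := by
    rw [Real.rpow_natCast, ← ENNReal.ofReal_mul (pow_nonneg hh0.le d),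
      mul_inv_cancel₀ (pow_ne_zero d hh0.ne'), ENNReal.ofReal_one]
  have hWre : W ^ (p-1) = ENNReal.ofReal (W.toReal ^ (p-1)) := by
    conv_lhs => rw [← ENNReal.ofReal_toReal hWtop]
    rw [ENNReal.ofReal_rpow_of_pos hWr]
  have hT : (C₁f * (B/2) ^ (-a)) ^ p = 2 ^ (a*p) * (C₁f ^ p * B ^ (-(a*p))) := by
    rw [Real.mul_rpow hC₁f.le (Real.rpow_nonneg (by positivity) _)]
    have h2 : ((B/2) ^ (-a) : ℝ) ^ p = (B/2) ^ (-(a*p)) := by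
      rw [← Real.rpow_mul (by positivity : (0:ℝ) ≤ B/2), neg_mul]
    have h3 : (B/2 : ℝ) ^ (-(a*p)) = B ^ (-(a*p)) * 2 ^ (a*p) := by
      rw [div_eq_mul_inv, Real.mul_rpow hBpos.le (by positivity),
        Real.inv_rpow (by norm_num : (0:ℝ) ≤ 2), Real.rpow_neg (by norm_num : (0:ℝ) ≤ 2),
        inv_inv]
    rw [h2, h3]; ring
  refine le_trans (mul_le_mul_right (ENNReal.tsum_le_tsum key) _) ?_
  calc ENNReal.ofReal (h ^ (d:ℝ)) *
        ∑' (α : {α : EuclideanSpace ℝ (Fin d) // α ∈ A ∧ nr ≤ ‖α‖}),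
          ((ENNReal.ofReal (C ^ p) * W ^ (p-1)) *
            (ENNReal.ofReal ((h ^ d)⁻¹) * ∫⁻ z in closedBall (h • α.1) h, F z ∂volume))
      = ENNReal.ofReal (h ^ (d:ℝ)) * ((ENNReal.ofReal (C ^ p) * W ^ (p-1)) *
          (ENNReal.ofReal ((h ^ d)⁻¹) *
            ∑' (α : {α : EuclideanSpace ℝ (Fin d) // α ∈ A ∧ nr ≤ ‖α‖}),
              ∫⁻ z in closedBall (h • α.1) h, F z ∂volume)) := by
        rw [ENNReal.tsum_mul_left, ENNReal.tsum_mul_left]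
    _ ≤ ENNReal.ofReal (h ^ (d:ℝ)) * ((ENNReal.ofReal (C ^ p) * W ^ (p-1)) *
          (ENNReal.ofReal ((h ^ d)⁻¹) *
            (ENNReal.ofReal Kr' * ENNReal.ofReal ((C₁f * (B/2) ^ (-a)) ^ p)))) := by
        exact mul_le_mul_right (mul_le_mul_right (mul_le_mul_right hsum _) _) _
    _ = (ENNReal.ofReal (h ^ (d:ℝ)) * ENNReal.ofReal ((h ^ d)⁻¹)) *
          (ENNReal.ofReal (C ^ p) * ENNReal.ofReal (W.toReal ^ (p-1)) * ENNReal.ofReal Kr'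
            * ENNReal.ofReal ((C₁f * (B/2) ^ (-a)) ^ p)) := by
        rw [hWre]; ring
    _ = ENNReal.ofReal (C ^ p * W.toReal ^ (p-1) * Kr' * ((C₁f * (B/2) ^ (-a)) ^ p)) := by
        rw [hone, one_mul, ← ENNReal.ofReal_mul (Real.rpow_nonneg hC.le p),
          ← ENNReal.ofReal_mul (by positivity), ← ENNReal.ofReal_mul (by positivity)]
    _ ≤ ENNReal.ofReal (C ^ p * W.toReal ^ (p - 1) * Kr' * 2 ^ (a * p) * C₁f ^ p
          * B ^ (-(a * p))) := by
        refine ENNReal.ofReal_le_ofReal (le_of_eq ?_)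
        rw [hT]; ring
    _ = ENNReal.ofReal (C ^ p * W.toReal ^ (p - 1) * Kr' * 2 ^ (a * p) * C₁f ^ p
          * B ^ (-(a * p))) := rfl
end

section
/- Let d ≥ 1, m_2 > 0, and h ∈ (0,1). For x ∈ ℝ^d and j ≥ 0, suppose coefficients b_j ≥ 0 satisfy b_j ≤ 2^{−j m_2} (2^j h)^{r−d} ∫_{B_{2^{j+3} h}(x)} g(z) dz for a nonnegative locally integrable g and real r with r < m_2. Then ∑_{j=0}^∞ b_j ≤ C h^r (g ∗ Ψ_h)(x), where Ψ(z) = ‖z‖^{−d+1}(1+‖z‖)^{−1−m_2+r} (in fact one may replace ‖z‖^{−d+1} by ‖z‖^{−d} capped appropriately), Ψ_h(·) = h^{−d}Ψ(·/h), and C depends only on d, r, m_2. -/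
open MeasureTheory Metric
open scoped ENNReal

lemma two_rpow_neg_lt_one {t : ℝ} (ht : 0 < t) : (2:ℝ) ^ (-t : ℝ) < 1 :=
  Real.rpow_lt_one_of_one_lt_of_neg (by norm_num) (by linarith)

lemma geom_aux (t : ℝ) (ht : 0 < t) (P : ℕ → Prop) [DecidablePred P]
    (j₀ : ℕ) (hP : ∀ j, P j → j₀ ≤ j) :
    (∑' j : ℕ, if P j then ENNReal.ofReal ((2:ℝ) ^ (-(j:ℝ) * t)) else 0)
      ≤ ENNReal.ofReal ((2:ℝ) ^ (-(j₀:ℝ) * t) * (1 - (2:ℝ) ^ (-t : ℝ))⁻¹) := by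
  set f : ℕ → ℝ≥0∞ := fun j => if P j then ENNReal.ofReal ((2:ℝ) ^ (-(j:ℝ) * t)) else 0 with hf
  have hinj : Function.Injective (fun k : ℕ => k + j₀) := add_left_injective j₀
  have hsupp : Function.support f ⊆ Set.range (fun k : ℕ => k + j₀) := by
    intro j hj
    have hPj : P j := by by_contra hc; simp [hf, hc] at hj
    exact ⟨j - j₀, by have := hP j hPj; simp; omega⟩
  rw [← Function.Injective.tsum_eq hinj hsupp]
  have hterm : ∀ k : ℕ, f (k + j₀) ≤
      ENNReal.ofReal ((2:ℝ) ^ (-(j₀:ℝ) * t)) * (ENNReal.ofReal ((2:ℝ) ^ (-t : ℝ))) ^ k := by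
    intro k
    have h1 : ((2:ℝ) ^ (-((k + j₀ : ℕ) : ℝ) * t)) =
        (2:ℝ) ^ (-(j₀:ℝ) * t) * ((2:ℝ) ^ (-t : ℝ)) ^ k := by
      rw [← Real.rpow_natCast ((2:ℝ) ^ (-t : ℝ)) k, ← Real.rpow_mul (by norm_num),
        ← Real.rpow_add (by norm_num)]
      push_cast
      ring_nf
    have h2 : f (k + j₀) ≤ ENNReal.ofReal ((2:ℝ) ^ (-((k + j₀ : ℕ) : ℝ) * t)) := by
      simp only [hf]; split <;> simp
    refine h2.trans (le_of_eq ?_)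
    rw [h1, ENNReal.ofReal_mul (by positivity), ENNReal.ofReal_pow (by positivity)]
  calc (∑' k : ℕ, f (k + j₀))
      ≤ ∑' k : ℕ, ENNReal.ofReal ((2:ℝ) ^ (-(j₀:ℝ) * t)) *
          (ENNReal.ofReal ((2:ℝ) ^ (-t : ℝ))) ^ k := ENNReal.tsum_le_tsum hterm
    _ = ENNReal.ofReal ((2:ℝ) ^ (-(j₀:ℝ) * t)) *
          (1 - ENNReal.ofReal ((2:ℝ) ^ (-t : ℝ)))⁻¹ := by
        rw [ENNReal.tsum_mul_left, ENNReal.tsum_geometric]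
    _ = ENNReal.ofReal ((2:ℝ) ^ (-(j₀:ℝ) * t) * (1 - (2:ℝ) ^ (-t : ℝ))⁻¹) := by
        have ha : (0:ℝ) < 1 - (2:ℝ) ^ (-t : ℝ) := by
          have := two_rpow_neg_lt_one ht; linarith
        rw [ENNReal.ofReal_mul (by positivity), ENNReal.ofReal_inv_of_pos ha,
          ENNReal.ofReal_sub _ (by positivity), ENNReal.ofReal_one]

lemma lintegral_sub_left_eq (d : ℕ) (G : EuclideanSpace ℝ (Fin d) → ℝ≥0∞)
    (x : EuclideanSpace ℝ (Fin d)) :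
    ∫⁻ z, G (x - z) = ∫⁻ y, G y := by
  have h := (Measure.measurePreserving_sub_left (volume : Measure (EuclideanSpace ℝ (Fin d))) x)
  have hc : ⇑(MeasurableEquiv.subLeft x) = fun t => x - t := rfl
  calc ∫⁻ z, G (x - z) = ∫⁻ z, G (MeasurableEquiv.subLeft x z) := rfl
    _ = ∫⁻ y, G y ∂(Measure.map (MeasurableEquiv.subLeft x) volume) :=
        (lintegral_map_equiv G (MeasurableEquiv.subLeft x)).symm
    _ = ∫⁻ y, G y := by rw [hc, h.map_eq]

lemma rpow_cast3 : (2:ℝ) ^ (3:ℝ) = 8 := by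
  rw [show (3:ℝ) = ((3:ℕ):ℝ) by norm_num, Real.rpow_natCast]; norm_num

lemma key_real (d : ℕ) (hd : 0 < d) (m₂ r : ℝ) (hm : 0 < m₂) (hr : r < m₂)
    (s : ℝ) (hs : 0 < s) (j₀ : ℕ)
    (hle : s ≤ (2:ℝ) ^ ((j₀:ℝ) + 3))
    (hgt : j₀ ≠ 0 → (2:ℝ) ^ ((j₀:ℝ) + 2) < s) :
    (2:ℝ) ^ (-(j₀:ℝ) * (m₂ + d - r)) * (1 - (2:ℝ) ^ (-(m₂ + d - r) : ℝ))⁻¹ ≤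
      ((1 - (2:ℝ) ^ (-(m₂ + d - r) : ℝ))⁻¹ *
        ((8:ℝ) ^ ((d:ℝ) - 1) * (9:ℝ) ^ (1 + m₂ - r) +
          (8:ℝ) ^ (m₂ + d - r) * (2:ℝ) ^ (1 + m₂ - r))) *
      (s ^ (-(d:ℝ) + 1) * (1 + s) ^ (-1 - m₂ + r)) := by
  have hd1 : (1:ℝ) ≤ (d:ℝ) := by exact_mod_cast hd
  set t : ℝ := m₂ + d - r with hts
  have ht : 0 < t := by simp only [hts]; linarith
  have h2t : (2:ℝ) ^ (-t : ℝ) < 1 :=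
    Real.rpow_lt_one_of_one_lt_of_neg (by norm_num) (by linarith)
  have hKpos : (0:ℝ) < (1 - (2:ℝ) ^ (-t : ℝ))⁻¹ := by
    have : (0:ℝ) < 1 - (2:ℝ) ^ (-t : ℝ) := by linarith
    positivity
  set K₀ : ℝ := (1 - (2:ℝ) ^ (-t : ℝ))⁻¹ with hK0
  set A : ℝ := (8:ℝ) ^ ((d:ℝ) - 1) * (9:ℝ) ^ (1 + m₂ - r) with hA
  set B : ℝ := (8:ℝ) ^ t * (2:ℝ) ^ (1 + m₂ - r) with hB
  have hApos : 0 < A := by rw [hA]; positivity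
  have hBpos : 0 < B := by rw [hB]; positivity
  have he₁' : (-(d:ℝ) + 1) ≤ 0 := by linarith
  have he₂' : (-1 - m₂ + r) ≤ 0 := by linarith
  have h2inv : (2:ℝ) ^ (1 + m₂ - r) * (2:ℝ) ^ (-1 - m₂ + r) = 1 := by
    rw [← Real.rpow_add (by norm_num)]; norm_num
  rcases Nat.eq_zero_or_pos j₀ with h0 | hpos
  · -- case s ≤ 8
    subst h0
    have hs8 : s ≤ 8 := by
      have h38 : ((0:ℕ):ℝ) + 3 = (3:ℝ) := by norm_num
      rw [h38, rpow_cast3] at hle; exact hle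
    have lhs_eq : (2:ℝ) ^ (-((0:ℕ):ℝ) * t) * K₀ = K₀ := by norm_num
    rw [lhs_eq]
    have h8 : (8:ℝ) ^ (-(d:ℝ) + 1) ≤ s ^ (-(d:ℝ) + 1) :=
      Real.rpow_le_rpow_of_nonpos hs hs8 he₁'
    have h9 : (9:ℝ) ^ (-1 - m₂ + r) ≤ (1 + s) ^ (-1 - m₂ + r) :=
      Real.rpow_le_rpow_of_nonpos (by linarith) (by linarith) he₂'
    have hAinv : A * ((8:ℝ) ^ (-(d:ℝ) + 1) * (9:ℝ) ^ (-1 - m₂ + r)) = 1 := by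
      rw [show A * ((8:ℝ) ^ (-(d:ℝ)+1) * (9:ℝ) ^ (-1-m₂+r)) =
        ((8:ℝ) ^ ((d:ℝ) - 1) * (8:ℝ) ^ (-(d:ℝ)+1)) *
        ((9:ℝ) ^ (1 + m₂ - r) * (9:ℝ) ^ (-1-m₂+r)) by rw [hA]; ring,
        ← Real.rpow_add (by norm_num), ← Real.rpow_add (by norm_num)]
      norm_num
    calc K₀ = K₀ * (A * ((8:ℝ) ^ (-(d:ℝ) + 1) * (9:ℝ) ^ (-1 - m₂ + r))) := by
          rw [hAinv, mul_one]
      _ ≤ K₀ * ((A + B) * (s ^ (-(d:ℝ) + 1) * (1 + s) ^ (-1 - m₂ + r))) := by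
          apply mul_le_mul_of_nonneg_left _ hKpos.le
          have h1 : A * ((8:ℝ) ^ (-(d:ℝ)+1) * (9:ℝ) ^ (-1-m₂+r)) ≤
              A * (s ^ (-(d:ℝ)+1) * (1+s) ^ (-1-m₂+r)) := by
            apply mul_le_mul_of_nonneg_left _ hApos.le
            apply mul_le_mul h8 h9 (by positivity) (by positivity)
          have h2 : 0 ≤ B * (s ^ (-(d:ℝ)+1) * (1+s) ^ (-1-m₂+r)) := by positivity
          nlinarith [h1, h2]
      _ = (K₀ * (A + B)) * (s ^ (-(d:ℝ) + 1) * (1 + s) ^ (-1 - m₂ + r)) := by ring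
  · -- case s > 2^{j₀+2} ≥ 4, s ≤ 2^{j₀+3}
    have hlt : (2:ℝ) ^ ((j₀:ℝ) + 2) < s := hgt (Nat.pos_iff_ne_zero.mp hpos)
    have h4le : (4:ℝ) ≤ (2:ℝ) ^ ((j₀:ℝ) + 2) := by
      have h1 : (2:ℝ) ^ (((2:ℕ)):ℝ) ≤ (2:ℝ) ^ ((j₀:ℝ) + 2) := by
        apply Real.rpow_le_rpow_of_exponent_le (by norm_num)
        have : (0:ℝ) ≤ (j₀:ℝ) := Nat.cast_nonneg _
        push_cast; linarith
      rw [Real.rpow_natCast] at h1; norm_num at h1; linarith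
    have hs1 : (1:ℝ) ≤ s := by linarith
    have h8t : (8:ℝ) ^ t = (2:ℝ) ^ (3 * t) := by
      rw [← rpow_cast3, ← Real.rpow_mul (by norm_num)]
    have ha : (2:ℝ) ^ (-(j₀:ℝ) * t) = (8:ℝ) ^ t * ((2:ℝ) ^ ((j₀:ℝ) + 3)) ^ (-t : ℝ) := by
      rw [h8t, ← Real.rpow_mul (by norm_num : (0:ℝ) ≤ 2),
        ← Real.rpow_add (by norm_num : (0:ℝ) < 2)]
      ring_nf
    have hb : ((2:ℝ) ^ ((j₀:ℝ) + 3)) ^ (-t : ℝ) ≤ s ^ (-t : ℝ) :=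
      Real.rpow_le_rpow_of_nonpos hs hle (by linarith)
    have hc : (2:ℝ) ^ (-1 - m₂ + r) * s ^ (-1 - m₂ + r) ≤ (1 + s) ^ (-1 - m₂ + r) := by
      rw [← Real.mul_rpow (by norm_num) (by linarith)]
      exact Real.rpow_le_rpow_of_nonpos (by linarith) (by linarith) he₂'
    have hsplit : s ^ (-t : ℝ) = s ^ (-(d:ℝ) + 1) * s ^ (-1 - m₂ + r) := by
      rw [← Real.rpow_add hs]
      congr 1
      simp only [hts]; ring
    have hBe : B * (2:ℝ) ^ (-1 - m₂ + r) = (8:ℝ) ^ t := by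
      rw [hB, mul_assoc, h2inv, mul_one]
    calc (2:ℝ) ^ (-(j₀:ℝ) * t) * K₀
        = K₀ * ((8:ℝ) ^ t * ((2:ℝ) ^ ((j₀:ℝ) + 3)) ^ (-t : ℝ)) := by rw [ha]; ring
      _ ≤ K₀ * ((8:ℝ) ^ t * s ^ (-t : ℝ)) := by
          apply mul_le_mul_of_nonneg_left _ hKpos.le
          apply mul_le_mul_of_nonneg_left hb (by positivity)
      _ = (K₀ * B) * (s ^ (-(d:ℝ) + 1) * ((2:ℝ) ^ (-1 - m₂ + r) * s ^ (-1 - m₂ + r))) := by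
          rw [← hBe, hsplit]; ring
      _ ≤ (K₀ * B) * (s ^ (-(d:ℝ) + 1) * (1 + s) ^ (-1 - m₂ + r)) := by
          apply mul_le_mul_of_nonneg_left _ (by positivity)
          apply mul_le_mul_of_nonneg_left hc (by positivity)
      _ ≤ (K₀ * (A + B)) * (s ^ (-(d:ℝ) + 1) * (1 + s) ^ (-1 - m₂ + r)) := by
          apply mul_le_mul_of_nonneg_right _ (by positivity)
          nlinarith [hApos, hKpos]

theorem stmt17 (d : ℕ) (hd : 0 < d) (m₂ r : ℝ) (hm : 0 < m₂) (hr : r < m₂) :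
    ∃ C : ℝ, 0 < C ∧
      ∀ h : ℝ, 0 < h → h < 1 →
      ∀ g : EuclideanSpace ℝ (Fin d) → ℝ, (∀ z, 0 ≤ g z) → LocallyIntegrable g volume →
      ∀ x : EuclideanSpace ℝ (Fin d), ∀ b : ℕ → ℝ, (∀ j, 0 ≤ b j) →
        (∀ j : ℕ, ENNReal.ofReal (b j) ≤
          ENNReal.ofReal ((2 : ℝ) ^ (-(j : ℝ) * m₂) * ((2 : ℝ) ^ (j : ℝ) * h) ^ (r - d)) *
            ∫⁻ z in closedBall x ((2 : ℝ) ^ ((j : ℝ) + 3) * h), ENNReal.ofReal (g z)) →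
        ∑' j, ENNReal.ofReal (b j) ≤
          ENNReal.ofReal (C * h ^ r) *
            ∫⁻ y, ENNReal.ofReal (g (x - y)) *
              ENNReal.ofReal (h ^ (-(d : ℝ)) *
                (‖h⁻¹ • y‖ ^ (-(d : ℝ) + 1) * (1 + ‖h⁻¹ • y‖) ^ (-1 - m₂ + r))) := by
  classical
  have hd1 : (1:ℝ) ≤ (d:ℝ) := by exact_mod_cast hd
  set t : ℝ := m₂ + d - r with hts
  have ht : 0 < t := by simp only [hts]; linarith
  have h2t : (2:ℝ) ^ (-t : ℝ) < 1 := two_rpow_neg_lt_one ht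
  have hKpos : (0:ℝ) < (1 - (2:ℝ) ^ (-t : ℝ))⁻¹ := by
    have : (0:ℝ) < 1 - (2:ℝ) ^ (-t : ℝ) := by linarith
    positivity
  set K₀ : ℝ := (1 - (2:ℝ) ^ (-t : ℝ))⁻¹ with hK0
  set A : ℝ := (8:ℝ) ^ ((d:ℝ) - 1) * (9:ℝ) ^ (1 + m₂ - r) with hA
  set B : ℝ := (8:ℝ) ^ t * (2:ℝ) ^ (1 + m₂ - r) with hB
  have hApos : 0 < A := by rw [hA]; positivity
  have hBpos : 0 < B := by rw [hB]; positivity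
  refine ⟨K₀ * (A + B), by positivity, ?_⟩
  intro h hh hh1 g hg0 hgli x b hb0 hb
  haveI : Nonempty (Fin d) := ⟨⟨0, hd⟩⟩
  set f : EuclideanSpace ℝ (Fin d) → ℝ≥0∞ := fun z => ENNReal.ofReal (g z) with hf
  have hfm : AEMeasurable f volume :=
    ENNReal.measurable_ofReal.comp_aemeasurable hgli.aestronglyMeasurable.aemeasurable
  -- the coefficient rewrite
  have hcj : ∀ j : ℕ, (2:ℝ) ^ (-(j:ℝ) * m₂) * ((2:ℝ) ^ (j:ℝ) * h) ^ (r - (d:ℝ)) =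
      (2:ℝ) ^ (-(j:ℝ) * t) * h ^ (r - (d:ℝ)) := by
    intro j
    rw [Real.mul_rpow (Real.rpow_pos_of_pos (by norm_num) _).le hh.le,
      ← Real.rpow_mul (by norm_num : (0:ℝ) ≤ 2), ← mul_assoc,
      ← Real.rpow_add (by norm_num : (0:ℝ) < 2)]
    congr 2
    simp only [hts]; ring
  -- indicator functions
  set F : ℕ → EuclideanSpace ℝ (Fin d) → ℝ≥0∞ := fun j z =>
    (closedBall x ((2:ℝ) ^ ((j:ℝ) + 3) * h)).indicator
      (fun z => ENNReal.ofReal ((2:ℝ) ^ (-(j:ℝ) * t) * h ^ (r - (d:ℝ))) * f z) z with hF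
  have hFm : ∀ j, AEMeasurable (F j) volume := fun j =>
    (AEMeasurable.indicator (aemeasurable_const.mul hfm) measurableSet_closedBall)
  have step1 : ∀ j : ℕ, ENNReal.ofReal (b j) ≤ ∫⁻ z, F j z := by
    intro j
    refine (hb j).trans ?_
    rw [hF]
    rw [lintegral_indicator measurableSet_closedBall]
    rw [lintegral_const_mul' _ _ ENNReal.ofReal_ne_top]
    rw [hcj j]
  have step2 : (∑' j, ENNReal.ofReal (b j)) ≤ ∫⁻ z, ∑' j, F j z := by
    refine (ENNReal.tsum_le_tsum step1).trans ?_
    rw [lintegral_tsum hFm]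
  refine step2.trans ?_
  -- pointwise a.e. bound
  have hae : ∀ᵐ z : EuclideanSpace ℝ (Fin d), z ≠ x := by
    have : volume ({x} : Set (EuclideanSpace ℝ (Fin d))) = 0 := measure_singleton x
    rw [MeasureTheory.ae_iff]
    simpa using this
  have hpt : ∀ z : EuclideanSpace ℝ (Fin d), z ≠ x →
      (∑' j, F j z) ≤ ENNReal.ofReal (K₀ * (A + B) * h ^ r) *
        (f z * ENNReal.ofReal (h ^ (-(d:ℝ)) *
          (‖h⁻¹ • (x - z)‖ ^ (-(d:ℝ) + 1) * (1 + ‖h⁻¹ • (x - z)‖) ^ (-1 - m₂ + r)))) := by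
    intro z hz
    set s : ℝ := ‖h⁻¹ • (x - z)‖ with hsdef
    have hxz : x - z ≠ 0 := sub_ne_zero.mpr (Ne.symm hz)
    have hsnorm : s = h⁻¹ * ‖x - z‖ := by
      rw [hsdef, norm_smul, Real.norm_eq_abs, abs_of_pos (inv_pos.mpr hh)]
    have hs : 0 < s := by
      rw [hsnorm]
      exact mul_pos (inv_pos.mpr hh) (norm_pos_iff.mpr hxz)
    -- membership ↔ s ≤ 2^{j+3}
    have hmem : ∀ j : ℕ, (z ∈ closedBall x ((2:ℝ) ^ ((j:ℝ) + 3) * h)) ↔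
        s ≤ (2:ℝ) ^ ((j:ℝ) + 3) := by
      intro j
      rw [mem_closedBall, dist_eq_norm, ← norm_sub_rev, hsnorm,
        inv_mul_le_iff₀ hh, mul_comm]
    -- rewrite F j z
    have hFz : ∀ j : ℕ, F j z =
        (if s ≤ (2:ℝ) ^ ((j:ℝ) + 3) then ENNReal.ofReal ((2:ℝ) ^ (-(j:ℝ) * t)) else 0) *
          (ENNReal.ofReal (h ^ (r - (d:ℝ))) * f z) := by
      intro j
      rw [hF]
      simp only [Set.indicator_apply]
      by_cases hmj : z ∈ closedBall x ((2:ℝ) ^ ((j:ℝ) + 3) * h)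
      · rw [if_pos hmj, if_pos ((hmem j).mp hmj),
          ENNReal.ofReal_mul (by positivity), mul_assoc]
      · rw [if_neg hmj, if_neg (fun hc => hmj ((hmem j).mpr hc)), zero_mul]
    -- geometric bound
    have hex : ∃ j : ℕ, s ≤ (2:ℝ) ^ ((j:ℝ) + 3) := by
      obtain ⟨n, hn⟩ := exists_nat_gt s
      refine ⟨n, hn.le.trans ?_⟩
      have h1 : (n:ℝ) ≤ (2:ℝ) ^ ((n:ℕ):ℝ) := by
        rw [Real.rpow_natCast]
        exact_mod_cast (Nat.lt_two_pow_self (n := n)).le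
      refine h1.trans (Real.rpow_le_rpow_of_exponent_le (by norm_num) (by linarith))
    set j₀ : ℕ := Nat.find hex with hj0
    have hle : s ≤ (2:ℝ) ^ ((j₀:ℝ) + 3) := Nat.find_spec hex
    have hgt : j₀ ≠ 0 → (2:ℝ) ^ ((j₀:ℝ) + 2) < s := by
      intro hne
      obtain ⟨k, hk⟩ := Nat.exists_eq_succ_of_ne_zero hne
      have hmin : ¬ (s ≤ (2:ℝ) ^ ((k:ℝ) + 3)) := Nat.find_min hex (by omega)
      push_neg at hmin
      have : ((k:ℝ) + 3) = ((j₀:ℝ) + 2) := by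
        have : (j₀:ℝ) = (k:ℝ) + 1 := by exact_mod_cast hk
        linarith
      rwa [this] at hmin
    have hgeom : (∑' j : ℕ, if s ≤ (2:ℝ) ^ ((j:ℝ) + 3)
          then ENNReal.ofReal ((2:ℝ) ^ (-(j:ℝ) * t)) else 0)
        ≤ ENNReal.ofReal ((2:ℝ) ^ (-(j₀:ℝ) * t) * K₀) :=
      geom_aux t ht _ j₀ (fun j hPj => Nat.find_le hPj)
    have hkey := key_real d hd m₂ r hm hr s hs j₀ hle hgt
    -- combine
    calc (∑' j, F j z)
        = (∑' j : ℕ, if s ≤ (2:ℝ) ^ ((j:ℝ) + 3)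
            then ENNReal.ofReal ((2:ℝ) ^ (-(j:ℝ) * t)) else 0) *
          (ENNReal.ofReal (h ^ (r - (d:ℝ))) * f z) := by
          simp_rw [hFz]
          rw [ENNReal.tsum_mul_right]
      _ ≤ ENNReal.ofReal (K₀ * (A + B) * (s ^ (-(d:ℝ) + 1) * (1 + s) ^ (-1 - m₂ + r))) *
          (ENNReal.ofReal (h ^ (r - (d:ℝ))) * f z) := by
          apply mul_le_mul_left
          refine hgeom.trans (ENNReal.ofReal_le_ofReal ?_)
          simpa [hK0, hA, hB, hts, mul_assoc] using hkey
      _ = ENNReal.ofReal (K₀ * (A + B) * h ^ r) *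
          (f z * ENNReal.ofReal (h ^ (-(d:ℝ)) *
            (s ^ (-(d:ℝ) + 1) * (1 + s) ^ (-1 - m₂ + r)))) := by
          have hCpos : (0:ℝ) < K₀ * (A + B) := mul_pos hKpos (add_pos hApos hBpos)
          have hsc : K₀ * (A + B) * (s ^ (-(d:ℝ) + 1) * (1 + s) ^ (-1 - m₂ + r)) *
              h ^ (r - (d:ℝ)) = K₀ * (A + B) * h ^ r *
              (h ^ (-(d:ℝ)) * (s ^ (-(d:ℝ) + 1) * (1 + s) ^ (-1 - m₂ + r))) := by
            rw [show h ^ (r - (d:ℝ)) = h ^ r * h ^ (-(d:ℝ)) by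
              rw [← Real.rpow_add hh]; ring_nf]
            ring
          have hnn1 : (0:ℝ) ≤ K₀ * (A + B) * (s ^ (-(d:ℝ) + 1) * (1 + s) ^ (-1 - m₂ + r)) :=
            mul_nonneg hCpos.le (by positivity)
          have hnn2 : (0:ℝ) ≤ K₀ * (A + B) * h ^ r :=
            mul_nonneg hCpos.le (Real.rpow_nonneg hh.le r)
          rw [← mul_assoc, ← ENNReal.ofReal_mul hnn1, hsc, ENNReal.ofReal_mul hnn2,
            mul_assoc, mul_comm (ENNReal.ofReal (h ^ (-(d:ℝ)) *
              (s ^ (-(d:ℝ) + 1) * (1 + s) ^ (-1 - m₂ + r)))) (f z)]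
  -- conclude
  calc (∫⁻ z, ∑' j, F j z)
      ≤ ∫⁻ z, ENNReal.ofReal (K₀ * (A + B) * h ^ r) *
          (f z * ENNReal.ofReal (h ^ (-(d:ℝ)) *
            (‖h⁻¹ • (x - z)‖ ^ (-(d:ℝ) + 1) * (1 + ‖h⁻¹ • (x - z)‖) ^ (-1 - m₂ + r)))) := by
        apply lintegral_mono_ae
        filter_upwards [hae] with z hz
        exact hpt z hz
    _ = ENNReal.ofReal (K₀ * (A + B) * h ^ r) *
        ∫⁻ z, (f z * ENNReal.ofReal (h ^ (-(d:ℝ)) *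
            (‖h⁻¹ • (x - z)‖ ^ (-(d:ℝ) + 1) * (1 + ‖h⁻¹ • (x - z)‖) ^ (-1 - m₂ + r)))) :=
        lintegral_const_mul' _ _ ENNReal.ofReal_ne_top
    _ = ENNReal.ofReal (K₀ * (A + B) * h ^ r) *
        ∫⁻ y, ENNReal.ofReal (g (x - y)) *
          ENNReal.ofReal (h ^ (-(d:ℝ)) *
            (‖h⁻¹ • y‖ ^ (-(d:ℝ) + 1) * (1 + ‖h⁻¹ • y‖) ^ (-1 - m₂ + r))) := by
        congr 1
        have := lintegral_sub_left_eq d (fun y => ENNReal.ofReal (g (x - y)) *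
          ENNReal.ofReal (h ^ (-(d:ℝ)) *
            (‖h⁻¹ • y‖ ^ (-(d:ℝ) + 1) * (1 + ‖h⁻¹ • y‖) ^ (-1 - m₂ + r)))) x
        rw [← this]
        congr 1
        funext z
        rw [show x - (x - z) = z from by abel]
end
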